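/- Let ω be an arbitrary factor of the period-doubling sequence D. (1) If Env(ω) = E_{1,m} for some m ≥ 1, then for every p ≥ 1: r_p(ω) = r_1(ω) if Θ_1[p] = a, and r_p(ω) = r_2(ω) if Θ_1[p] = b; i.e., the return word sequence {r_p(ω)}_{p≥1} is Θ_1 over the alphabet {r_1(ω), r_2(ω)}. (2) If Env(ω) = E_{2,m} for some m ≥ 1, then for every p ≥ 1: r_p(ω) = r_1(ω) if Θ_2[p] = a, r_p(ω) = r_2(ω) if Θ_2[p] = b, and r_p(ω) = r_4(ω) if Θ_2[p] = c; i.e., the return word sequence {r_p(ω)}_{p≥1} is Θ_2 over the alphabet {r_1(ω), r_2(ω), r_4(ω)}. -/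

import Mathlib

/-- The alphabet: letters a, b (for the period-doubling sequence) and c (used by Θ₂). -/
inductive Letter : Type
  | a | b | c
deriving DecidableEq, Repr

open Letter

/-- The period-doubling substitution σ : a ↦ ab, b ↦ aa, extended to words
(the extra letter c is left untouched; it is never produced). -/
def sigmaw : List Letter → List Letter :=
  fun w => w.flatMap fun x => match x with
    | .a => [.a, .b]
    | .b => [.a, .a]
    | .c => [.c]

/-- A_m = σ^m(a). -/
def A (m : ℕ) : List Letter := sigmaw^[m] [.a]

/-- B_m = σ^m(b). -/
def B (m : ℕ) : List Letter := sigmaw^[m] [.b]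

/-- δ_m, the last letter of A_m. -/
def delta (m : ℕ) : Letter := (A m).getLastD .a

/-- The period-doubling sequence D, as a function giving its (n+1)-st letter
(0-indexed); it is the fixed point of σ beginning with a, and A_{n+1} is a
prefix of it of length 2^{n+1} > n. -/
def D (n : ℕ) : Letter := (A (n + 1)).getD n .a

/-- The finite segment D[i .. i+len−1] of the period-doubling sequence,
with 1-based starting position i. -/
def Dseg (i len : ℕ) : List Letter := (List.range len).map fun k => D (i - 1 + k)

/-- u occurs in the finite word w at (1-based) position i. -/
def OccursAt {α : Type*} (u w : List α) (i : ℕ) : Prop :=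
  1 ≤ i ∧ i - 1 + u.length ≤ w.length ∧ (w.drop (i - 1)).take u.length = u

/-- u is a factor of the finite word w. -/
def IsFactor {α : Type*} (u w : List α) : Prop := ∃ i, OccursAt u w i

/-- u occurs in the period-doubling sequence D at (1-based) position i. -/
def DOccursAt (u : List Letter) (i : ℕ) : Prop := 1 ≤ i ∧ Dseg i u.length = u

/-- u is a factor of the period-doubling sequence D. -/
def FactorD (u : List Letter) : Prop := ∃ i, DOccursAt u i

/-- L(u,p): the starting position of the p-th occurrence (p ≥ 1) of u in D. -/
noncomputable def L (u : List Letter) (p : ℕ) : ℕ := Nat.nth (DOccursAt u) (p - 1)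

/-- r_p(u): the p-th return word of u (p ≥ 1), i.e. D[L(u,p) .. L(u,p+1)−1];
r_0(u) is the prefix of D preceding the first occurrence of u. -/
noncomputable def r (u : List Letter) (p : ℕ) : List Letter :=
  if p = 0 then Dseg 1 (L u 1 - 1) else Dseg (L u p) (L u (p + 1) - L u p)

/-- The morphism τ₁ : a ↦ a, b ↦ bb, extended to words. -/
def tau1 : List Letter → List Letter :=
  fun w => w.flatMap fun x => match x with
    | .a => [.a]
    | .b => [.b, .b]
    | .c => [.c]

/-- The morphism τ₂ : a ↦ ab, b ↦ acac, extended to words. -/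
def tau2 : List Letter → List Letter :=
  fun w => w.flatMap fun x => match x with
    | .a => [.a, .b]
    | .b => [.a, .c, .a, .c]
    | .c => [.c]

/-- Θ₁[p], the p-th letter (p ≥ 1) of Θ₁ = τ₁(D): since |τ₁(w)| ≥ |w|, the p-th
letter of Θ₁ is the p-th letter of the image of the length-p prefix of D. -/
def Theta1 (p : ℕ) : Letter := (tau1 (Dseg 1 p)).getD (p - 1) .a

/-- Θ₂[p], the p-th letter (p ≥ 1) of Θ₂ = τ₂(D). -/
def Theta2 (p : ℕ) : Letter := (tau2 (Dseg 1 p)).getD (p - 1) .a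

/-- The envelope word E_{1,m} = A_m with its last letter δ_m deleted. -/
def E1 (m : ℕ) : List Letter := (A m).dropLast

/-- The envelope word E_{2,m} = B_m B_{m−1} with its last letter δ_m deleted. -/
def E2 (m : ℕ) : List Letter := (B m ++ B (m - 1)).dropLast

/-- Enumeration of the envelope words in the order
E_{1,1} ⊏ E_{2,1} ⊏ E_{1,2} ⊏ E_{2,2} ⊏ …. -/
def Eword (k : ℕ) : List Letter := if k % 2 = 0 then E1 (k / 2 + 1) else E2 (k / 2 + 1)

/-- Env(u): the ⊏-least envelope word having u as a factor. -/
noncomputable def Env (u : List Letter) : List Letter :=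
  Eword (sInf {k | IsFactor u (Eword k)})

/-- The letterwise complement exchanging a and b. -/
def comp : Letter → Letter
  | .a => .b
  | .b => .a
  | .c => .c


namespace PD


open Letter

lemma n_lt_pow {n m : ℕ} (h : n ≤ m) : n < 2^m :=
  lt_of_lt_of_le (Nat.lt_two_pow_self (n := n)) (Nat.pow_le_pow_right (by norm_num) h)

lemma pow_pos2 (m : ℕ) : 0 < 2^m := Nat.pow_pos (n := m) (by norm_num)

lemma comp_comp (x : Letter) : comp (comp x) = x := by cases x <;> rfl

lemma sigmaw_append (u v : List Letter) : sigmaw (u ++ v) = sigmaw u ++ sigmaw v := by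
  simp [sigmaw]

lemma iter_sigmaw_append (m : ℕ) (u v : List Letter) :
    sigmaw^[m] (u ++ v) = sigmaw^[m] u ++ sigmaw^[m] v := by
  induction m generalizing u v with
  | zero => rfl
  | succ m ih => simp only [Function.iterate_succ_apply, sigmaw_append, ih]

lemma A_succ (m : ℕ) : A (m+1) = A m ++ B m := by
  have h : A (m+1) = sigmaw^[m] ([Letter.a] ++ [Letter.b]) := by
    rw [A, Function.iterate_succ_apply]; rfl
  rw [h, iter_sigmaw_append]; rfl

lemma B_succ (m : ℕ) : B (m+1) = A m ++ A m := by
  have h : B (m+1) = sigmaw^[m] ([Letter.a] ++ [Letter.a]) := by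
    rw [B, Function.iterate_succ_apply]; rfl
  rw [h, iter_sigmaw_append]; rfl

lemma A_iter_succ' (m : ℕ) : A (m+1) = sigmaw (A m) := Function.iterate_succ_apply' _ _ _

lemma length_AB (m : ℕ) : (A m).length = 2^m ∧ (B m).length = 2^m := by
  induction m with
  | zero => exact ⟨rfl, rfl⟩
  | succ m ih =>
    refine ⟨?_, ?_⟩
    · rw [A_succ]; simp [ih.1, ih.2]; rw [pow_succ]; omega
    · rw [B_succ]; simp [ih.1, ih.2]; rw [pow_succ]; omega

lemma length_A (m : ℕ) : (A m).length = 2^m := (length_AB m).1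
lemma length_B (m : ℕ) : (B m).length = 2^m := (length_AB m).2

lemma B_ne_nil (m : ℕ) : B m ≠ [] := by
  intro h
  have h1 := length_B m
  rw [h] at h1
  simp at h1
  have := pow_pos2 m
  omega

lemma A_ne_nil (m : ℕ) : A m ≠ [] := by
  intro h
  have h1 := length_A m
  rw [h] at h1
  simp at h1
  have := pow_pos2 m
  omega

lemma dropLast_AB (m : ℕ) : (A m).dropLast = (B m).dropLast := by
  induction m with
  | zero => rfl
  | succ m ih =>
    rw [A_succ, B_succ, List.dropLast_append_of_ne_nil (B_ne_nil m),
      List.dropLast_append_of_ne_nil (A_ne_nil m), ih]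

lemma notc_AB (m : ℕ) : (Letter.c ∉ A m) ∧ (Letter.c ∉ B m) := by
  induction m with
  | zero => constructor <;> simp [A, B]
  | succ m ih =>
    rw [A_succ, B_succ]
    constructor <;> simp [List.mem_append, ih.1, ih.2]

lemma sigmaw_cons (x : Letter) (u : List Letter) (hx : x ≠ Letter.c) :
    sigmaw (x :: u) = Letter.a :: comp x :: sigmaw u := by
  cases x
  · rfl
  · rfl
  · exact absurd rfl hx

lemma sigmaw_length (u : List Letter) (hc : Letter.c ∉ u) :
    (sigmaw u).length = 2 * u.length := by
  induction u with
  | nil => rfl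
  | cons x u ih =>
    have hx : x ≠ Letter.c := fun h => hc (h ▸ List.mem_cons_self (a := x) (l := u))
    rw [sigmaw_cons x u hx]
    simp only [List.length_cons]
    rw [ih (fun h => hc (List.mem_cons_of_mem x h))]
    ring

lemma sigmaw_getD (u : List Letter) (hc : Letter.c ∉ u) (k : ℕ) (hk : k < u.length) :
    (sigmaw u).getD (2*k) Letter.a = Letter.a ∧
    (sigmaw u).getD (2*k+1) Letter.a = comp (u.getD k Letter.a) := by
  induction u generalizing k with
  | nil => simp at hk
  | cons x u ih =>
    have hx : x ≠ Letter.c := fun h => hc (h ▸ List.mem_cons_self (a := x) (l := u))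
    rw [sigmaw_cons x u hx]
    cases k with
    | zero => exact ⟨rfl, rfl⟩
    | succ k =>
      have hih := ih (fun h => hc (List.mem_cons_of_mem x h)) k (Nat.lt_of_succ_lt_succ hk)
      constructor
      · have e : 2*(k+1) = (2*k)+1+1 := by ring
        rw [e, List.getD_cons_succ, List.getD_cons_succ]
        exact hih.1
      · have e : 2*(k+1)+1 = ((2*k)+1)+1+1 := by ring
        rw [e, List.getD_cons_succ, List.getD_cons_succ, List.getD_cons_succ]
        exact hih.2

lemma A_prefix_getD (m j : ℕ) (hj : j < 2^m) :
    (A (m+1)).getD j Letter.a = (A m).getD j Letter.a := by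
  rw [A_succ]
  exact List.getD_append _ _ _ _ (by rw [length_A]; exact hj)

lemma A_getD_mono (m m' j : ℕ) (h : m ≤ m') (hj : j < 2^m) :
    (A m').getD j Letter.a = (A m).getD j Letter.a := by
  induction m', h using Nat.le_induction with
  | base => rfl
  | succ m' hm ih =>
    rw [A_prefix_getD m' j (lt_of_lt_of_le hj (Nat.pow_le_pow_right (by norm_num) hm)), ih]

lemma D_eq_A_getD (m n : ℕ) (h : n < 2^m) : D n = (A m).getD n Letter.a := by
  rcases le_total m (n+1) with hm | hm
  · rw [D, A_getD_mono m (n+1) n hm h]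
  · rw [D, A_getD_mono (n+1) m n hm (n_lt_pow (Nat.le_succ n))]

lemma D_even (q : ℕ) : D (2*q) = Letter.a := by
  have h1 : 2*q < 2^(q+1) := by
    have := Nat.lt_two_pow_self (n := q)
    rw [pow_succ]; omega
  rw [D_eq_A_getD (q+1) (2*q) h1, A_iter_succ']
  exact (sigmaw_getD (A q) (notc_AB q).1 q (by rw [length_A]; exact Nat.lt_two_pow_self (n := q))).1

lemma D_odd (q : ℕ) : D (2*q+1) = comp (D q) := by
  have h1 : 2*q+1 < 2^(q+2) := by
    have := Nat.lt_two_pow_self (n := q)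
    rw [pow_succ, pow_succ]
    omega
  rw [D_eq_A_getD (q+2) (2*q+1) h1, A_iter_succ',
    (sigmaw_getD (A (q+1)) (notc_AB (q+1)).1 q
      (by rw [length_A]; exact n_lt_pow (Nat.le_succ q))).2,
    D_eq_A_getD (q+1) q (n_lt_pow (Nat.le_succ q))]

lemma D_zero : D 0 = Letter.a := rfl

lemma D_one : D 1 = Letter.b := rfl

lemma D_cases (n : ℕ) : D n = Letter.a ∨ D n = Letter.b := by
  have h : D n = (A (n+1)).getD n Letter.a := rfl
  have hn : n < (A (n+1)).length := by rw [length_A]; exact n_lt_pow (Nat.le_succ n)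
  rw [List.getD_eq_getElem _ _ hn] at h
  have hmem : (A (n+1))[n] ∈ A (n+1) := List.getElem_mem _
  cases hx : (A (n+1))[n] with
  | a => left; rw [h, hx]
  | b => right; rw [h, hx]
  | c => exact absurd (hx ▸ hmem) (notc_AB (n+1)).1

lemma nobb (n : ℕ) (h : D n = Letter.b) : D (n+1) = Letter.a := by
  rcases Nat.even_or_odd n with ⟨q, hq⟩ | ⟨q, hq⟩
  · exfalso
    rw [hq, ← two_mul, D_even] at h
    exact Letter.noConfusion h
  · rw [hq]
    have : 2*q+1+1 = 2*(q+1) := by ring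
    rw [this, D_even]


def sg (i n : ℕ) : List Letter := (List.range n).map fun k => D (i + k)

lemma Dseg_eq_sg (i n : ℕ) : Dseg i n = sg (i-1) n := rfl

lemma length_sg (i n : ℕ) : (sg i n).length = n := by simp [sg]

lemma sg_getD (i n j : ℕ) (hj : j < n) : (sg i n).getD j Letter.a = D (i + j) := by
  rw [sg, List.getD_eq_getElem _ _ (by simpa using hj)]
  simp

lemma sg_eq_iff (u : List Letter) (i n : ℕ) :
    sg i n = u ↔ n = u.length ∧ ∀ j < n, D (i + j) = u.getD j Letter.a := by
  constructor
  · intro h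
    subst h
    exact ⟨(length_sg i n).symm, fun j hj => (sg_getD i n j hj).symm⟩
  · rintro ⟨hl, hp⟩
    apply List.ext_getElem (by rw [length_sg, hl])
    intro j h1 h2
    have hj : j < n := by rwa [length_sg] at h1
    have h3 := hp j hj
    rw [← sg_getD i n j hj] at h3
    rw [List.getD_eq_getElem _ _ h1, List.getD_eq_getElem _ _ h2] at h3
    exact h3

lemma sg_append (i n n' : ℕ) : sg i (n + n') = sg i n ++ sg (i + n) n' := by
  rw [sg, List.range_add, List.map_append, List.map_map]
  congr 1
  apply List.map_congr_left
  intro k _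
  show D (i + (n + k)) = D (i + n + k)
  rw [Nat.add_assoc]

def Mt (u : List Letter) (i : ℕ) : Prop := ∀ j < u.length, D (i + j) = u.getD j Letter.a

lemma mt_iff (u : List Letter) (i : ℕ) : Mt u i ↔ sg i u.length = u := by
  rw [sg_eq_iff]
  simp [Mt]

lemma DOccursAt_iff (u : List Letter) (i : ℕ) :
    DOccursAt u i ↔ 1 ≤ i ∧ Mt u (i-1) := by
  constructor
  · rintro ⟨h1, h2⟩
    exact ⟨h1, (mt_iff u (i-1)).2 h2⟩
  · rintro ⟨h1, h2⟩
    exact ⟨h1, (mt_iff u (i-1)).1 h2⟩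

lemma factorD_iff (u : List Letter) : FactorD u ↔ ∃ i, Mt u i := by
  constructor
  · rintro ⟨i, hi⟩
    exact ⟨i - 1, ((DOccursAt_iff u i).1 hi).2⟩
  · rintro ⟨i, hi⟩
    refine ⟨i + 1, (DOccursAt_iff u (i+1)).2 ⟨by omega, by simpa using hi⟩⟩

def blk (m q : ℕ) : List Letter := if D q = Letter.a then A m else B m

lemma blk_eq_A {m q : ℕ} (h : D q = Letter.a) : blk m q = A m := if_pos h

lemma blk_eq_B {m q : ℕ} (h : D q = Letter.b) : blk m q = B m := by
  rw [blk, h]; simp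

lemma length_blk (m q : ℕ) : (blk m q).length = 2^m := by
  rw [blk]; split
  · exact length_A m
  · exact length_B m

lemma sg_blk (m q : ℕ) : sg (q * 2^m) (2^m) = blk m q := by
  induction m generalizing q with
  | zero =>
    rcases D_cases q with h | h
    · rw [blk_eq_A h, pow_zero, mul_one]
      apply (sg_eq_iff _ _ _).2
      refine ⟨rfl, ?_⟩
      intro j hj
      have hj0 : j = 0 := by omega
      subst hj0
      simpa [A] using h
    · rw [blk_eq_B h, pow_zero, mul_one]
      apply (sg_eq_iff _ _ _).2
      refine ⟨rfl, ?_⟩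
      intro j hj
      have hj0 : j = 0 := by omega
      subst hj0
      simpa [B] using h
  | succ m ih =>
    have key : sg (q * 2^(m+1)) (2^(m+1)) = blk m (2*q) ++ blk m (2*q+1) := by
      have e1 : q * 2^(m+1) = (2*q) * 2^m := by rw [pow_succ]; ring
      have e2 : (2:ℕ)^(m+1) = 2^m + 2^m := by rw [pow_succ]; ring
      have e3 : (2*q) * 2^m + 2^m = (2*q+1) * 2^m := by ring
      rw [e1, e2, sg_append, e3, ih (2*q), ih (2*q+1)]
    rw [key, blk_eq_A (D_even q)]
    rcases D_cases q with h | h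
    · rw [blk_eq_B (show D (2*q+1) = Letter.b by rw [D_odd, h]; rfl), blk_eq_A (m := m+1) h,
        A_succ]
    · rw [blk_eq_A (show D (2*q+1) = Letter.a by rw [D_odd, h]; rfl), blk_eq_B (m := m+1) h,
        B_succ]

lemma D_blk (m q j : ℕ) (hj : j < 2^m) : D (q * 2^m + j) = (blk m q).getD j Letter.a := by
  have h := (sg_eq_iff (blk m q) (q * 2^m) (2^m)).1 (sg_blk m q)
  exact h.2 j hj

lemma getD_dropLast (l : List Letter) (j : ℕ) (h : j < l.length - 1) :
    l.dropLast.getD j Letter.a = l.getD j Letter.a := by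
  rw [List.getD_eq_getElem _ _ (by rw [List.length_dropLast]; exact h),
      List.getD_eq_getElem _ _ (by omega), List.getElem_dropLast]

lemma A_getD_D (m j : ℕ) (hj : j < 2^m) : (A m).getD j Letter.a = D j := by
  have h := D_blk m 0 j hj
  rw [blk_eq_A D_zero] at h
  simpa using h.symm

lemma B_getD_D (m j : ℕ) (hj : j < 2^m - 1) : (B m).getD j Letter.a = D j := by
  have h1 : (B m).getD j Letter.a = (B m).dropLast.getD j Letter.a :=
    (getD_dropLast (B m) j (by rw [length_B]; exact hj)).symm
  rw [h1, ← dropLast_AB, getD_dropLast (A m) j (by rw [length_A]; exact hj),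
    A_getD_D m j (by omega)]

lemma blk_getD_D (m q j : ℕ) (hj : j < 2^m - 1) : (blk m q).getD j Letter.a = D j := by
  rw [blk]; split
  · exact A_getD_D m j (by omega)
  · exact B_getD_D m j hj

lemma D_head (m q j : ℕ) (hj : j < 2^m - 1) : D (q * 2^m + j) = D j := by
  rw [D_blk m q j (by omega), blk_getD_D m q j hj]

lemma wagree (m q q' : ℕ) (h : D q = D q') (j : ℕ) (hj : j < 2^(m+1) - 1) :
    D (q * 2^m + j) = D (q' * 2^m + j) := by
  have hps : (2:ℕ)^(m+1) = 2^m * 2 := pow_succ 2 m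
  have hpp := pow_pos2 m
  rcases lt_or_ge j (2^m) with hj1 | hj1
  · rw [D_blk m q j hj1, D_blk m q' j hj1, blk, blk, h]
  · have hj2 : j - 2^m < 2^m - 1 := by omega
    calc D (q * 2^m + j) = D ((q+1) * 2^m + (j - 2^m)) := by
          congr 1
          rw [add_one_mul]
          omega
    _ = D (j - 2^m) := D_head m (q+1) _ hj2
    _ = D ((q'+1) * 2^m + (j - 2^m)) := (D_head m (q'+1) _ hj2).symm
    _ = D (q' * 2^m + j) := by
          congr 1
          rw [add_one_mul]
          omega
lemma length_E1 (m : ℕ) : (E1 m).length = 2^m - 1 := by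
  rw [E1, List.length_dropLast, length_A]

lemma E1_getD_D (m j : ℕ) (hj : j < 2^m - 1) : (E1 m).getD j Letter.a = D j := by
  rw [E1, getD_dropLast _ _ (by rw [length_A]; omega), A_getD_D m j (by omega)]

lemma length_E2 (m : ℕ) : (E2 (m+1)).length = 3 * 2^m - 1 := by
  rw [E2, List.length_dropLast, List.length_append, length_B, length_B]
  simp only [Nat.add_sub_cancel]
  rw [pow_succ]
  omega

lemma E2_getD_D (m j : ℕ) (hj : j < 3 * 2^m - 1) :
    (E2 (m+1)).getD j Letter.a = D (2^(m+1) + j) := by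
  have hps : (2:ℕ)^(m+1) = 2^m * 2 := pow_succ 2 m
  have hpp := pow_pos2 m
  rw [E2]
  simp only [Nat.add_sub_cancel]
  rw [getD_dropLast _ _ (by
    rw [List.length_append, length_B, length_B]; omega)]
  rcases lt_or_ge j (2^(m+1)) with h | h
  · rw [List.getD_append _ _ _ _ (by rw [length_B]; exact h)]
    have hb := D_blk (m+1) 1 j h
    rw [blk_eq_B D_one, one_mul] at hb
    exact hb.symm
  · have hj' : j - 2^(m+1) < 2^m - 1 := by omega
    rw [List.getD_append_right _ _ _ _ (by rw [length_B]; exact h), length_B,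
      B_getD_D m _ hj']
    have e : 2^(m+1) + j = 2 * 2^(m+1) + (j - 2^(m+1)) := by omega
    rw [e, D_head (m+1) 2 _ (by omega)]

lemma isFactor_iff_getD (u w : List Letter) :
    IsFactor u w ↔ ∃ s, s + u.length ≤ w.length ∧
      ∀ j < u.length, w.getD (s+j) Letter.a = u.getD j Letter.a := by
  constructor
  · rintro ⟨i, h1, h2, h3⟩
    refine ⟨i-1, by omega, ?_⟩
    intro j hj
    have hl2 : j < ((w.drop (i-1)).take u.length).length := by rw [h3]; exact hj
    calc w.getD (i-1+j) Letter.a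
        = ((w.drop (i-1)).take u.length).getD j Letter.a := by
          rw [List.getD_eq_getElem _ _ hl2,
            List.getD_eq_getElem _ _ (show i-1+j < w.length by omega)]
          rw [List.getElem_take, List.getElem_drop]
      _ = u.getD j Letter.a := by rw [h3]
  · rintro ⟨s, hb, hp⟩
    refine ⟨s+1, by omega, by simpa using hb, ?_⟩
    simp only [Nat.add_sub_cancel]
    apply List.ext_getElem
    · rw [List.length_take, List.length_drop]; omega
    · intro j h1 h2
      have hj : j < u.length := h2
      have h4 := hp j hj
      rw [List.getD_eq_getElem _ _ (show s+j < w.length by omega),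
          List.getD_eq_getElem _ _ h2] at h4
      rw [List.getElem_take, List.getElem_drop]
      exact h4

lemma isFactor_iff_infix (u w : List Letter) : IsFactor u w ↔ u <:+: w := by
  constructor
  · rintro ⟨i, h1, h2, h3⟩
    have hpre : u <+: w.drop (i-1) := h3 ▸ List.take_prefix _ _
    exact hpre.isInfix.trans (List.drop_suffix _ _).isInfix
  · rintro ⟨s, t, e⟩
    refine ⟨s.length + 1, by omega, ?_, ?_⟩
    · simp only [Nat.add_sub_cancel]
      rw [← e]
      simp
    · simp only [Nat.add_sub_cancel]
      rw [← e, List.append_assoc, List.drop_left, List.take_left]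

lemma isFactor_E1_iff (m : ℕ) (u : List Letter) :
    IsFactor u (E1 m) ↔ ∃ s, s + u.length ≤ 2^m - 1 ∧ Mt u s := by
  rw [isFactor_iff_getD]
  constructor
  · rintro ⟨s, hb, hp⟩
    rw [length_E1] at hb
    refine ⟨s, hb, ?_⟩
    intro j hj
    rw [← hp j hj, E1_getD_D m (s+j) (by omega)]
  · rintro ⟨s, hb, hp⟩
    refine ⟨s, by rw [length_E1]; exact hb, ?_⟩
    intro j hj
    rw [E1_getD_D m (s+j) (by omega), hp j hj]

lemma isFactor_E2_iff (p : ℕ) (u : List Letter) :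
    IsFactor u (E2 (p+1)) ↔ ∃ s, s + u.length ≤ 3 * 2^p - 1 ∧ Mt u (2^(p+1) + s) := by
  rw [isFactor_iff_getD]
  constructor
  · rintro ⟨s, hb, hp⟩
    rw [length_E2] at hb
    refine ⟨s, hb, ?_⟩
    intro j hj
    rw [← hp j hj, E2_getD_D p (s+j) (by omega), Nat.add_assoc]
  · rintro ⟨s, hb, hp⟩
    refine ⟨s, by rw [length_E2]; exact hb, ?_⟩
    intro j hj
    rw [E2_getD_D p (s+j) (by omega), ← Nat.add_assoc]
    exact hp j hj

lemma Eword_even (p : ℕ) : Eword (2*p) = E1 (p+1) := by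
  have h1 : (2*p) % 2 = 0 := by omega
  have h2 : (2*p) / 2 = p := by omega
  rw [Eword, h1, h2]
  simp

lemma Eword_odd (p : ℕ) : Eword (2*p+1) = E2 (p+1) := by
  have h1 : (2*p+1) % 2 = 1 := by omega
  have h2 : (2*p+1) / 2 = p := by omega
  rw [Eword, h1, h2]
  simp

lemma E1_one : E1 1 = [Letter.a] := rfl

lemma E2_one : E2 1 = [Letter.a, Letter.a] := rfl

lemma not_factor_E1one {u : List Letter} (hne : u ≠ []) (hu : u ≠ [Letter.a]) :
    ¬ IsFactor u (E1 1) := by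
  intro h
  rw [E1_one, isFactor_iff_infix] at h
  have hlen := h.length_le
  rcases u with _ | ⟨x, _ | ⟨y, u⟩⟩
  · exact hne rfl
  · cases x
    · exact hu rfl
    · revert h; decide
    · revert h; decide
  · simp at hlen

lemma not_factor_E2one {u : List Letter} (hne : u ≠ []) (hu1 : u ≠ [Letter.a])
    (hu2 : u ≠ [Letter.a, Letter.a]) : ¬ IsFactor u (E2 1) := by
  intro h
  rw [E2_one, isFactor_iff_infix] at h
  have hlen := h.length_le
  rcases u with _ | ⟨x, _ | ⟨y, _ | ⟨z, u⟩⟩⟩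
  · exact hne rfl
  · cases x
    · exact hu1 rfl
    · revert h; decide
    · revert h; decide
  · cases x <;> cases y
    case a.a => exact hu2 rfl
    all_goals revert h; decide
  · simp at hlen
def up (c : ℕ) (u : List Letter) : List Letter := List.replicate c Letter.a ++ u

def dsb (v : List Letter) : List Letter :=
  (List.range (v.length / 2)).map (fun r => comp (v.getD (2*r+1) Letter.a))

lemma length_up (c : ℕ) (u : List Letter) : (up c u).length = c + u.length := by
  simp [up]

lemma length_dsb (v : List Letter) : (dsb v).length = v.length / 2 := by
  simp [dsb]

lemma up_getD (c : ℕ) (u : List Letter) (j : ℕ) :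
    (up c u).getD (c + j) Letter.a = u.getD j Letter.a := by
  rw [up, List.getD_append_right _ _ _ _ (by simp)]
  simp

lemma up_getD_lt (c : ℕ) (u : List Letter) (j : ℕ) (h : j < c) :
    (up c u).getD j Letter.a = Letter.a := by
  rw [up, List.getD_append _ _ _ _ (by simp; omega), List.getD_eq_getElem _ _ (by simp; omega)]
  simp

lemma dsb_getD (v : List Letter) (r : ℕ) (h : r < v.length / 2) :
    (dsb v).getD r Letter.a = comp (v.getD (2*r+1) Letter.a) := by
  rw [dsb, List.getD_eq_getElem _ _ (by simpa using h)]
  simp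

lemma mt_dsb_of (v : List Letter) (i' : ℕ) (h : Mt v (2*i')) : Mt (dsb v) i' := by
  intro r hr
  rw [length_dsb] at hr
  rw [dsb_getD v r hr, ← h (2*r+1) (by omega)]
  have e : 2*i' + (2*r+1) = 2*(i'+r)+1 := by ring
  rw [e, D_odd, comp_comp]

lemma mt_of_dsb (v : List Letter) (i' : ℕ)
    (heven : ∀ r, 2*r < v.length → v.getD (2*r) Letter.a = Letter.a)
    (h : Mt (dsb v) i') : Mt v (2*i') := by
  intro j hj
  rcases Nat.even_or_odd j with ⟨r, hr⟩ | ⟨r, hr⟩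
  · subst hr
    have e : 2*i' + (r+r) = 2*(i'+r) := by ring
    rw [e, D_even, show r+r = 2*r by ring, heven r (by omega)]
  · subst hr
    have hr2 : r < v.length / 2 := by omega
    have e : 2*i' + (2*r+1) = 2*(i'+r)+1 := by ring
    rw [e, D_odd]
    have h2 := h r (by rw [length_dsb]; exact hr2)
    rw [dsb_getD v r hr2] at h2
    rw [h2, comp_comp]

lemma mt_up (c : ℕ) (hc : c < 2) (u : List Letter) (i' : ℕ) :
    Mt (up c u) (2*i') ↔ Mt u (2*i' + c) := by
  constructor
  · intro h j hj
    have h2 := h (c+j) (by rw [length_up]; omega)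
    rw [up_getD] at h2
    rw [← h2]
    congr 1
    omega
  · intro h j hj
    rw [length_up] at hj
    rcases lt_or_ge j c with hjc | hjc
    · have hj0 : j = 0 := by omega
      have hc1 : c = 1 := by omega
      subst hj0
      rw [up_getD_lt c u 0 hjc]
      simpa using D_even i'
    · have e : j = c + (j - c) := by omega
      rw [e, up_getD, ← h (j-c) (by omega)]
      congr 1
      omega

lemma heven_of (c : ℕ) (u : List Letter) (i' : ℕ) (h : Mt (up c u) (2*i')) :
    ∀ r, 2*r < (up c u).length → (up c u).getD (2*r) Letter.a = Letter.a := by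
  intro r hr
  rw [← h (2*r) hr]
  have e : 2*i' + 2*r = 2*(i'+r) := by ring
  rw [e, D_even]

lemma mt_letters (u : List Letter) (i : ℕ) (h : Mt u i) (j : ℕ) (hj : j < u.length) :
    u.getD j Letter.a = Letter.a ∨ u.getD j Letter.a = Letter.b := by
  rw [← h j hj]
  exact D_cases (i + j)

lemma parity_const (u : List Letter) (i₀ : ℕ) (h₀ : Mt u i₀) (hne : u ≠ [])
    (h1 : u ≠ [Letter.a]) (h2 : u ≠ [Letter.a, Letter.a]) :
    ∃ c, c < 2 ∧ ∀ i, Mt u i → i % 2 = c := by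
  by_cases hb : ∃ j, j < u.length ∧ u.getD j Letter.a = Letter.b
  · obtain ⟨j, hj, hbj⟩ := hb
    refine ⟨(j+1) % 2, by omega, ?_⟩
    intro i hi
    have h3 := hi j hj
    rw [hbj] at h3
    have hodd : (i + j) % 2 = 1 := by
      rcases Nat.even_or_odd (i+j) with ⟨r, hr⟩ | ⟨r, hr⟩
      · exfalso
        rw [hr, ← two_mul, D_even] at h3
        exact Letter.noConfusion h3
      · omega
    omega
  · push_neg at hb
    have hall : ∀ j, j < u.length → u.getD j Letter.a = Letter.a := by
      intro j hj
      rcases mt_letters u i₀ h₀ j hj with h | h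
      · exact h
      · exact absurd h (hb j hj)
    have hlen : 3 ≤ u.length := by
      rcases u with _ | ⟨x, _ | ⟨y, _ | ⟨z, v⟩⟩⟩
      · exact absurd rfl hne
      · have := hall 0 (by simp)
        simp at this
        exact absurd (by rw [this]) h1
      · have ha := hall 0 (by simp)
        have hb2 := hall 1 (by simp)
        simp at ha hb2
        exact absurd (by rw [ha, hb2]) h2
      · simp only [List.length_cons]
        omega
    refine ⟨0, by omega, ?_⟩
    intro i hi
    rcases Nat.even_or_odd i with ⟨r, hr⟩ | ⟨r, hr⟩
    · omega
    · exfalso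
      have e1 := hi 0 (by omega)
      have e2 := hi 2 (by omega)
      rw [hall 0 (by omega)] at e1
      rw [hall 2 (by omega)] at e2
      rw [hr] at e1 e2
      have o1 : 2*r+1+0 = 2*r+1 := by ring
      have o2 : 2*r+1+2 = 2*(r+1)+1 := by ring
      rw [o1, D_odd] at e1
      rw [o2, D_odd] at e2
      have hbr : D r = Letter.b := by
        cases hr2 : D r
        · rw [hr2] at e1; exact absurd e1 (by simp [comp])
        · rfl
        · rw [hr2] at e1; exact absurd e1 (by simp [comp])
      have hbr1 : D (r+1) = Letter.b := by
        cases hr2 : D (r+1)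
        · rw [hr2] at e2; exact absurd e2 (by simp [comp])
        · rfl
        · rw [hr2] at e2; exact absurd e2 (by simp [comp])
      have := nobb r hbr
      rw [this] at hbr1
      exact Letter.noConfusion hbr1
def Pat1 (p t i : ℕ) : Prop :=
  (∃ q, i = q * 2^(p+1) + t) ∨ (∃ q, D q = Letter.b ∧ i = q * 2^(p+1) + 2^p + t)

def Pat2 (p t i : ℕ) : Prop := ∃ q, D q = Letter.a ∧ D (q+1) = Letter.a ∧ i = q * 2^p + t

noncomputable def K0 (u : List Letter) : ℕ := sInf {k | IsFactor u (Eword k)}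

section descent

variable {u : List Letter} {c : ℕ}

lemma mt_desc_iff (hc : c < 2)
    (heven : ∀ r, 2*r < (up c u).length → (up c u).getD (2*r) Letter.a = Letter.a)
    (i' : ℕ) : Mt (dsb (up c u)) i' ↔ Mt u (2*i' + c) := by
  constructor
  · intro h
    exact (mt_up c hc u i').1 (mt_of_dsb _ _ heven h)
  · intro h
    exact mt_dsb_of _ _ ((mt_up c hc u i').2 h)

lemma fac1_desc (hc : c < 2) (hpar : ∀ i, Mt u i → i % 2 = c)
    (heven : ∀ r, 2*r < (up c u).length → (up c u).getD (2*r) Letter.a = Letter.a)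
    (m : ℕ) :
    (∃ s, s + u.length ≤ 2^(m+1) - 1 ∧ Mt u s) ↔
    (∃ s', s' + (dsb (up c u)).length ≤ 2^m - 1 ∧ Mt (dsb (up c u)) s') := by
  have hlen : (dsb (up c u)).length = (c + u.length) / 2 := by rw [length_dsb, length_up]
  have hp2 : (2:ℕ)^(m+1) = 2 * 2^m := by rw [pow_succ]; ring
  have hpp := pow_pos2 m
  constructor
  · rintro ⟨s, hb, hm⟩
    have hsc := hpar s hm
    refine ⟨(s - c)/2, by omega, ?_⟩
    rw [mt_desc_iff hc heven]
    rw [show 2*((s-c)/2) + c = s by omega]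
    exact hm
  · rintro ⟨s', hb, hm'⟩
    exact ⟨2*s' + c, by omega, (mt_desc_iff hc heven s').1 hm'⟩

lemma fac2_desc (hc : c < 2) (hpar : ∀ i, Mt u i → i % 2 = c)
    (heven : ∀ r, 2*r < (up c u).length → (up c u).getD (2*r) Letter.a = Letter.a)
    (p : ℕ) :
    (∃ s, s + u.length ≤ 3*2^(p+1) - 1 ∧ Mt u (2^(p+2) + s)) ↔
    (∃ s', s' + (dsb (up c u)).length ≤ 3*2^p - 1 ∧ Mt (dsb (up c u)) (2^(p+1) + s')) := by
  have hlen : (dsb (up c u)).length = (c + u.length) / 2 := by rw [length_dsb, length_up]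
  have hp1 : (2:ℕ)^(p+1) = 2 * 2^p := by rw [pow_succ]; ring
  have hp2 : (2:ℕ)^(p+2) = 2 * 2^(p+1) := by rw [pow_succ]; ring
  have hpp := pow_pos2 p
  constructor
  · rintro ⟨s, hb, hm⟩
    have hsc := hpar _ hm
    have hs2 : s % 2 = c := by omega
    refine ⟨(s - c)/2, by omega, ?_⟩
    rw [mt_desc_iff hc heven]
    rw [show 2*(2^(p+1) + (s-c)/2) + c = 2^(p+2) + s by omega]
    exact hm
  · rintro ⟨s', hb, hm'⟩
    refine ⟨2*s' + c, by omega, ?_⟩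
    have := (mt_desc_iff hc heven (2^(p+1) + s')).1 hm'
    rw [show 2*(2^(p+1) + s') + c = 2^(p+2) + (2*s' + c) by omega] at this
    exact this

lemma fac_Eword_desc (hc : c < 2) (hpar : ∀ i, Mt u i → i % 2 = c)
    (heven : ∀ r, 2*r < (up c u).length → (up c u).getD (2*r) Letter.a = Letter.a)
    (k : ℕ) : IsFactor u (Eword (k+2)) ↔ IsFactor (dsb (up c u)) (Eword k) := by
  rcases Nat.even_or_odd k with ⟨j, hj⟩ | ⟨j, hj⟩
  · have hk : k = 2*j := by omega
    subst hk
    rw [show 2*j+2 = 2*(j+1) by ring, Eword_even, Eword_even, isFactor_E1_iff, isFactor_E1_iff]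
    exact fac1_desc hc hpar heven (j+1)
  · have hk : k = 2*j+1 := by omega
    subst hk
    rw [show 2*j+1+2 = 2*(j+1)+1 by ring, Eword_odd, Eword_odd, isFactor_E2_iff,
      isFactor_E2_iff]
    exact fac2_desc hc hpar heven j

lemma exists_mem_S (u : List Letter) (hne : u ≠ []) (i : ℕ) (h : Mt u i) :
    IsFactor u (Eword (2*(i + u.length - 1))) := by
  have hl : 1 ≤ u.length := List.length_pos_iff.2 hne
  rw [Eword_even, isFactor_E1_iff]
  refine ⟨i, ?_, h⟩
  have h2 : i + u.length < 2^(i + u.length) := Nat.lt_two_pow_self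
  have h3 : i + u.length - 1 + 1 = i + u.length := by omega
  rw [h3]
  omega

lemma K0_desc (hc : c < 2) (hpar : ∀ i, Mt u i → i % 2 = c)
    (heven : ∀ r, 2*r < (up c u).length → (up c u).getD (2*r) Letter.a = Letter.a)
    (hne : u ≠ []) (hA : u ≠ [Letter.a]) (hAA : u ≠ [Letter.a, Letter.a])
    (i₀' : ℕ) (hm' : Mt (dsb (up c u)) i₀') (hne' : dsb (up c u) ≠ []) :
    K0 u = K0 (dsb (up c u)) + 2 := by
  have h0 : ¬ IsFactor u (Eword 0) := by
    rw [show Eword 0 = E1 1 from rfl]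
    exact not_factor_E1one hne hA
  have h1 : ¬ IsFactor u (Eword 1) := by
    rw [show Eword 1 = E2 1 from rfl]
    exact not_factor_E2one hne hA hAA
  have hmem' : IsFactor (dsb (up c u)) (Eword (2*(i₀' + (dsb (up c u)).length - 1))) :=
    exists_mem_S _ hne' i₀' hm'
  have hK'mem : K0 (dsb (up c u)) ∈ {k | IsFactor (dsb (up c u)) (Eword k)} :=
    Nat.sInf_mem ⟨_, hmem'⟩
  have hmemS : (K0 (dsb (up c u)) + 2) ∈ {k | IsFactor u (Eword k)} :=
    (fac_Eword_desc hc hpar heven _).2 hK'mem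
  apply le_antisymm (Nat.sInf_le hmemS)
  have hi₀ : Mt u (2*i₀' + c) := (mt_desc_iff hc heven i₀').1 hm'
  have hKS : K0 u ∈ {k | IsFactor u (Eword k)} :=
    Nat.sInf_mem ⟨_, exists_mem_S u hne _ hi₀⟩
  have hge : 2 ≤ K0 u := by
    by_contra hlt
    push_neg at hlt
    interval_cases h : (K0 u)
    · exact h0 hKS
    · exact h1 hKS
  have hsub : K0 u - 2 ∈ {k | IsFactor (dsb (up c u)) (Eword k)} := by
    apply (fac_Eword_desc hc hpar heven (K0 u - 2)).1
    rw [show K0 u - 2 + 2 = K0 u by omega]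
    exact hKS
  have h9 : K0 (dsb (up c u)) ≤ K0 u - 2 := Nat.sInf_le hsub
  show K0 (dsb (up c u)) + 2 ≤ K0 u
  omega

end descent

lemma mt_single (x : Letter) (i : ℕ) : Mt [x] i ↔ D i = x := by
  constructor
  · intro h
    simpa using h 0 (by simp)
  · intro h j hj
    simp at hj
    subst hj
    simpa using h

lemma mt_pair (x y : Letter) (i : ℕ) : Mt [x,y] i ↔ D i = x ∧ D (i+1) = y := by
  constructor
  · intro h
    exact ⟨by simpa using h 0 (by simp), by simpa using h 1 (by simp)⟩
  · rintro ⟨h0, h1⟩ j hj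
    simp at hj
    interval_cases j
    · simpa using h0
    · simpa using h1

lemma Da_iff (i : ℕ) : D i = Letter.a ↔
    (∃ q, i = 2*q) ∨ (∃ q, D q = Letter.b ∧ i = 2*q + 1) := by
  constructor
  · intro h
    rcases Nat.even_or_odd i with ⟨r, hr⟩ | ⟨r, hr⟩
    · exact Or.inl ⟨r, by omega⟩
    · right
      refine ⟨r, ?_, hr⟩
      rw [hr, D_odd] at h
      cases hr2 : D r
      · rw [hr2] at h; exact absurd h (by simp [comp])
      · rfl
      · rw [hr2] at h; exact absurd h (by simp [comp])
  · rintro (⟨q, rfl⟩ | ⟨q, hq, rfl⟩)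
    · exact D_even q
    · rw [D_odd, hq]; rfl

lemma Db_iff (i : ℕ) : D i = Letter.b ↔ ∃ r, D r = Letter.a ∧ i = 2*r + 1 := by
  constructor
  · intro h
    rcases Nat.even_or_odd i with ⟨r, hr⟩ | ⟨r, hr⟩
    · exfalso
      rw [hr, ← two_mul, D_even] at h
      exact Letter.noConfusion h
    · refine ⟨r, ?_, hr⟩
      rw [hr, D_odd] at h
      cases hr2 : D r
      · rfl
      · rw [hr2] at h; exact absurd h (by simp [comp])
      · rw [hr2] at h; exact absurd h (by simp [comp])
  · rintro ⟨r, hr, rfl⟩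
    rw [D_odd, hr]; rfl

lemma K0_base_a : K0 [Letter.a] = 0 := by
  apply Nat.sInf_eq_zero.2
  left
  show IsFactor [Letter.a] (Eword 0)
  rw [isFactor_iff_infix]
  decide

lemma K0_base_aa : K0 [Letter.a, Letter.a] = 1 := by
  have h0 : ¬ IsFactor [Letter.a, Letter.a] (Eword 0) := by
    rw [isFactor_iff_infix]
    decide
  have h1 : IsFactor [Letter.a, Letter.a] (Eword 1) := by
    rw [isFactor_iff_infix]
    decide
  have hle : K0 [Letter.a, Letter.a] ≤ 1 := Nat.sInf_le h1
  have hmem := Nat.sInf_mem (⟨1, h1⟩ : Set.Nonempty {k | IsFactor [Letter.a, Letter.a] (Eword k)})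
  rcases Nat.lt_or_ge (K0 [Letter.a, Letter.a]) 1 with h | h
  · exfalso
    have h5 : K0 [Letter.a, Letter.a] = 0 := by omega
    have hmem2 : K0 [Letter.a, Letter.a] ∈
        {k | IsFactor [Letter.a, Letter.a] (Eword k)} := hmem
    rw [h5] at hmem2
    exact h0 hmem2
  · omega

lemma K0_base_b : K0 [Letter.b] = 2 := by
  have h0 : ¬ IsFactor [Letter.b] (Eword 0) := by
    rw [isFactor_iff_infix]; decide
  have h1 : ¬ IsFactor [Letter.b] (Eword 1) := by
    rw [isFactor_iff_infix]; decide
  have h2 : IsFactor [Letter.b] (Eword 2) := by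
    rw [isFactor_iff_infix]; decide
  have hle : K0 [Letter.b] ≤ 2 := Nat.sInf_le h2
  have hmem := Nat.sInf_mem (⟨2, h2⟩ : Set.Nonempty {k | IsFactor [Letter.b] (Eword k)})
  rcases Nat.lt_or_ge (K0 [Letter.b]) 2 with h | h
  · exfalso
    have hmem2 : K0 [Letter.b] ∈ {k | IsFactor [Letter.b] (Eword k)} := hmem
    interval_cases hk : (K0 [Letter.b])
    · exact h0 hmem2
    · exact h1 hmem2
  · omega
lemma pat1_def (p t i : ℕ) : Pat1 p t i ↔
    (∃ q, i = q * 2^(p+1) + t) ∨ (∃ q, D q = Letter.b ∧ i = q * 2^(p+1) + 2^p + t) := Iff.rfl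

lemma pat2_def (p t i : ℕ) : Pat2 p t i ↔
    ∃ q, D q = Letter.a ∧ D (q+1) = Letter.a ∧ i = q * 2^p + t := Iff.rfl

theorem occ_main (N : ℕ) : ∀ u : List Letter, u.length ≤ N → u ≠ [] → (∃ i, Mt u i) →
    (∀ p, K0 u = 2*p →
      ∃ t, t + u.length ≤ 2^(p+1) - 1 ∧ ∀ i, Mt u i ↔ Pat1 p t i) ∧
    (∀ p, K0 u = 2*p+1 →
      ∃ t, t ≤ 2^p - 1 ∧ t + u.length ≤ 3*2^p - 1 ∧ ∀ i, Mt u i ↔ Pat2 p t i) := by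
  induction N with
  | zero =>
    intro u hl hne _
    exact absurd (List.length_eq_zero_iff.1 (by omega)) hne
  | succ N IH =>
    intro u hlen hne hfac
    obtain ⟨i₀, hi₀⟩ := hfac
    by_cases hA : u = [Letter.a]
    · subst hA
      constructor
      · intro p hp
        rw [K0_base_a] at hp
        have hp0 : p = 0 := by omega
        subst hp0
        refine ⟨0, by norm_num, ?_⟩
        intro i
        rw [mt_single, Da_iff, pat1_def]
        simp only [pow_succ, pow_zero, one_mul]
        constructor
        · rintro (⟨q, rfl⟩ | ⟨q, hq, rfl⟩)
          · exact Or.inl ⟨q, by omega⟩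
          · exact Or.inr ⟨q, hq, by omega⟩
        · rintro (⟨q, hqe⟩ | ⟨q, hq, hqe⟩)
          · exact Or.inl ⟨q, by omega⟩
          · exact Or.inr ⟨q, hq, by omega⟩
      · intro p hp
        rw [K0_base_a] at hp
        exact absurd hp (by omega)
    by_cases hB : u = [Letter.b]
    · subst hB
      constructor
      · intro p hp
        rw [K0_base_b] at hp
        have hp0 : p = 1 := by omega
        subst hp0
        refine ⟨1, by norm_num, ?_⟩
        intro i
        rw [mt_single, Db_iff, pat1_def]
        simp only [pow_succ, pow_zero, pow_one, one_mul]
        constructor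
        · rintro ⟨r, hr, rfl⟩
          rcases (Da_iff r).1 hr with ⟨q, rfl⟩ | ⟨q, hq, rfl⟩
          · exact Or.inl ⟨q, by omega⟩
          · exact Or.inr ⟨q, hq, by omega⟩
        · rintro (⟨q, hqe⟩ | ⟨q, hq, hqe⟩)
          · exact ⟨2*q, (Da_iff _).2 (Or.inl ⟨q, rfl⟩), by omega⟩
          · exact ⟨2*q+1, (Da_iff _).2 (Or.inr ⟨q, hq, rfl⟩), by omega⟩
      · intro p hp
        rw [K0_base_b] at hp
        exact absurd hp (by omega)
    by_cases hAA : u = [Letter.a, Letter.a]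
    · subst hAA
      constructor
      · intro p hp
        rw [K0_base_aa] at hp
        exact absurd hp (by omega)
      · intro p hp
        rw [K0_base_aa] at hp
        have hp0 : p = 0 := by omega
        subst hp0
        refine ⟨0, by norm_num, by norm_num, ?_⟩
        intro i
        rw [mt_pair, pat2_def]
        simp only [pow_zero, mul_one, add_zero]
        constructor
        · rintro ⟨h1, h2⟩
          exact ⟨i, h1, h2, rfl⟩
        · rintro ⟨q, h1, h2, rfl⟩
          exact ⟨h1, h2⟩
    -- general step
    have hlen2 : 2 ≤ u.length := by
      rcases u with _ | ⟨x, _ | ⟨y, v2⟩⟩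
      · exact absurd rfl hne
      · exfalso
        cases x
        · exact hA rfl
        · exact hB rfl
        · have hc0 := hi₀ 0 (by simp)
          simp only [Nat.add_zero, List.getD_cons_zero] at hc0
          rcases D_cases i₀ with h | h
          · exact Letter.noConfusion (h ▸ hc0)
          · exact Letter.noConfusion (h ▸ hc0)
      · simp only [List.length_cons]; omega
    obtain ⟨c, hc, hpar⟩ := parity_const u i₀ hi₀ hne hA hAA
    have hi₀e : 2 * ((i₀ - c)/2) + c = i₀ := by
      have := hpar i₀ hi₀
      omega
    have hvmt : Mt (up c u) (2*((i₀ - c)/2)) :=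
      (mt_up c hc u _).2 (by rw [hi₀e]; exact hi₀)
    have heven := heven_of c u _ hvmt
    have hlenw : (dsb (up c u)).length = (c + u.length) / 2 := by
      rw [length_dsb, length_up]
    have hwne : dsb (up c u) ≠ [] := by
      intro h
      rw [h] at hlenw
      simp at hlenw
      omega
    have hdesc : ∀ i', Mt (dsb (up c u)) i' ↔ Mt u (2*i' + c) := mt_desc_iff hc heven
    have hwmt : Mt (dsb (up c u)) ((i₀ - c)/2) := (hdesc _).2 (by rw [hi₀e]; exact hi₀)
    have hK := K0_desc hc hpar heven hne hA hAA _ hwmt hwne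
    obtain ⟨hIH1, hIH2⟩ := IH (dsb (up c u)) (by omega) hwne ⟨_, hwmt⟩
    have hul : c + u.length ≤ 2 * (dsb (up c u)).length + 1 := by omega
    constructor
    · intro p hp
      have hp1 : 1 ≤ p := by omega
      have hKw : K0 (dsb (up c u)) = 2*(p-1) := by omega
      obtain ⟨t', hb', hpat'⟩ := hIH1 (p-1) hKw
      have hpe : p - 1 + 1 = p := by omega
      rw [hpe] at hb'
      have h2p : (2:ℕ)^(p+1) = 2 * 2^p := by rw [pow_succ]; ring
      have h2pm : (2:ℕ)^p = 2 * 2^(p-1) := by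
        conv_lhs => rw [← hpe]
        rw [pow_succ]; ring
      refine ⟨2*t' + c, by omega, ?_⟩
      intro i
      constructor
      · intro hm
        have hc2 := hpar i hm
        have hi' : i = 2*((i-c)/2) + c := by omega
        have hmw : Mt (dsb (up c u)) ((i-c)/2) := (hdesc _).2 (by rw [← hi']; exact hm)
        have hp2 := (hpat' _).1 hmw
        rw [pat1_def] at hp2
        rw [pat1_def]
        rcases hp2 with ⟨q, hq⟩ | ⟨q, hD, hq⟩
        · left
          refine ⟨q, ?_⟩
          rw [hpe] at hq
          rw [hi', hq, h2p]
          ring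
        · right
          refine ⟨q, hD, ?_⟩
          rw [hpe] at hq
          rw [hi', hq, h2p, h2pm]
          ring
      · intro hpat
        rw [pat1_def] at hpat
        rcases hpat with ⟨q, hq⟩ | ⟨q, hD, hq⟩
        · have he : i = 2*(q * 2^(p-1+1) + t') + c := by
            rw [hpe, hq, h2p]; ring
          rw [he]
          exact (hdesc _).1 ((hpat' _).2 ((pat1_def _ _ _).2 (Or.inl ⟨q, rfl⟩)))
        · have he : i = 2*(q * 2^(p-1+1) + 2^(p-1) + t') + c := by
            rw [hpe, hq, h2p, h2pm]; ring
          rw [he]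
          exact (hdesc _).1 ((hpat' _).2 ((pat1_def _ _ _).2 (Or.inr ⟨q, hD, rfl⟩)))
    · intro p hp
      have hp1 : 1 ≤ p := by omega
      have hKw : K0 (dsb (up c u)) = 2*(p-1)+1 := by omega
      obtain ⟨t', ht1', hb', hpat'⟩ := hIH2 (p-1) hKw
      have hpe : p - 1 + 1 = p := by omega
      have h2pm : (2:ℕ)^p = 2 * 2^(p-1) := by
        conv_lhs => rw [← hpe]
        rw [pow_succ]; ring
      refine ⟨2*t' + c, by omega, by omega, ?_⟩
      intro i
      constructor
      · intro hm
        have hc2 := hpar i hm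
        have hi' : i = 2*((i-c)/2) + c := by omega
        have hmw : Mt (dsb (up c u)) ((i-c)/2) := (hdesc _).2 (by rw [← hi']; exact hm)
        have hp2 := (hpat' _).1 hmw
        rw [pat2_def] at hp2
        rw [pat2_def]
        obtain ⟨q, h1, h2, hq⟩ := hp2
        refine ⟨q, h1, h2, ?_⟩
        rw [hi', hq, h2pm]
        ring
      · intro hpat
        rw [pat2_def] at hpat
        obtain ⟨q, h1, h2, hq⟩ := hpat
        have he : i = 2*(q * 2^(p-1) + t') + c := by
          rw [hq, h2pm]; ring
        rw [he]
        exact (hdesc _).1 ((hpat' _).2 ((pat2_def _ _ _).2 ⟨q, h1, h2, rfl⟩))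
def cnt (β : ℕ → ℕ) (n : ℕ) : ℕ := ∑ q ∈ Finset.range n, β q

lemma cnt_zero (β : ℕ → ℕ) : cnt β 0 = 0 := rfl

lemma cnt_succ (β : ℕ → ℕ) (n : ℕ) : cnt β (n+1) = cnt β n + β n :=
  Finset.sum_range_succ β n

lemma cnt_mono (β : ℕ → ℕ) {a b : ℕ} (h : a ≤ b) : cnt β a ≤ cnt β b := by
  apply Finset.sum_le_sum_of_subset
  exact Finset.range_subset_range.2 h

lemma le_cnt (β : ℕ → ℕ) (hβ : ∀ q, 1 ≤ β q) (n : ℕ) : n ≤ cnt β n := by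
  induction n with
  | zero => simp [cnt_zero]
  | succ n ih =>
    rw [cnt_succ]
    have := hβ n
    omega

def inv (β : ℕ → ℕ) (n : ℕ) : ℕ := Nat.findGreatest (fun q => cnt β q ≤ n) n

lemma inv_spec (β : ℕ → ℕ) (hβ : ∀ q, 1 ≤ β q) (n : ℕ) :
    cnt β (inv β n) ≤ n ∧ n < cnt β (inv β n + 1) := by
  constructor
  · exact Nat.findGreatest_spec (P := fun q => cnt β q ≤ n) (Nat.zero_le n)
      (show cnt β 0 ≤ n by rw [cnt_zero]; exact Nat.zero_le n)
  · by_contra hcon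
    push_neg at hcon
    have hb : inv β n + 1 ≤ n := le_trans (le_cnt β hβ _) hcon
    have h3 : ¬ (cnt β (inv β n + 1) ≤ n) :=
      Nat.findGreatest_is_greatest (P := fun q => cnt β q ≤ n)
        (Nat.lt_succ_self _) hb
    exact h3 hcon

lemma inv_eq (β : ℕ → ℕ) (hβ : ∀ q, 1 ≤ β q) {n q : ℕ}
    (h1 : cnt β q ≤ n) (h2 : n < cnt β (q+1)) : inv β n = q := by
  obtain ⟨ha, hb⟩ := inv_spec β hβ n
  rcases Nat.lt_trichotomy (inv β n) q with h | h | h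
  · exfalso
    have := cnt_mono β (show inv β n + 1 ≤ q by omega)
    omega
  · exact h
  · exfalso
    have := cnt_mono β (show q + 1 ≤ inv β n by omega)
    omega

section enum

variable (β : ℕ → ℕ) (P : ℕ → ℕ → ℕ)

def ee (n : ℕ) : ℕ := P (inv β n) (n - cnt β (inv β n))

variable (hβ : ∀ q, 1 ≤ β q)
  (hm1 : ∀ q j, j + 1 < β q → P q j < P q (j+1))
  (hm2 : ∀ q, P q (β q - 1) < P (q+1) 0)

include hβ in
lemma ee_at (q j : ℕ) (hj : j < β q) : ee β P (cnt β q + j) = P q j := by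
  have hinv : inv β (cnt β q + j) = q :=
    inv_eq β hβ (by omega) (by rw [cnt_succ]; omega)
  rw [ee, hinv]
  congr 1
  omega

include hβ hm1 hm2 in
lemma ee_strictMono : StrictMono (ee β P) := by
  apply strictMono_nat_of_lt_succ
  intro n
  obtain ⟨ha, hb⟩ := inv_spec β hβ n
  set q := inv β n with hq
  set j := n - cnt β q with hj
  have hjlt : j < β q := by rw [cnt_succ] at hb; omega
  have hen : ee β P n = P q j := by rw [ee]
  rcases Nat.lt_or_ge (j+1) (β q) with hcase | hcase
  · have h1 : n + 1 = cnt β q + (j+1) := by omega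
    have := ee_at β P hβ q (j+1) hcase
    rw [h1, this, hen]
    exact hm1 q j hcase
  · have hjeq : j + 1 = β q := by omega
    have h1 : n + 1 = cnt β (q+1) + 0 := by rw [cnt_succ]; omega
    have := ee_at β P hβ (q+1) 0 (hβ (q+1))
    rw [h1, this, hen]
    have : j = β q - 1 := by omega
    rw [this]
    exact hm2 q

include hβ in
lemma ee_surj (x : ℕ) :
    (∃ n, ee β P n = x) ↔ ∃ q j, j < β q ∧ P q j = x := by
  constructor
  · rintro ⟨n, rfl⟩
    obtain ⟨ha, hb⟩ := inv_spec β hβ n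
    rw [cnt_succ] at hb
    exact ⟨inv β n, n - cnt β (inv β n), by omega, rfl⟩
  · rintro ⟨q, j, hj, rfl⟩
    exact ⟨cnt β q + j, ee_at β P hβ q j hj⟩

end enum

lemma nth_of_strictMono (Q : ℕ → Prop) (f : ℕ → ℕ) (hf : StrictMono f)
    (hr : ∀ x, Q x ↔ ∃ n, f n = x) : ∀ n, Nat.nth Q n = f n := by
  intro n
  induction n using Nat.strong_induction_on with
  | _ n ih =>
    rw [Nat.nth_eq_sInf]
    have hmem : f n ∈ {x | Q x ∧ ∀ k < n, Nat.nth Q k < x} := by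
      refine ⟨(hr _).2 ⟨n, rfl⟩, ?_⟩
      intro k hk
      rw [ih k hk]
      exact hf hk
    apply le_antisymm (Nat.sInf_le hmem)
    obtain ⟨hQ, hlt⟩ := Nat.sInf_mem (⟨f n, hmem⟩ : Set.Nonempty _)
    obtain ⟨m, hm⟩ := (hr _).1 hQ
    by_contra hcon
    push_neg at hcon
    have hmn : m < n := by
      by_contra hcon2
      push_neg at hcon2
      have := hf.monotone hcon2
      omega
    have h2 := hlt m hmn
    rw [ih m hmn, hm] at h2
    omega
lemma sg_one (i : ℕ) : sg i 1 = [D i] := by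
  rw [sg, show List.range 1 = [0] from rfl]
  simp

lemma sg_succ (n : ℕ) : sg 0 (n+1) = sg 0 n ++ [D n] := by
  rw [sg_append, sg_one]
  simp

section theta

variable (W : Letter → List Letter)

lemma flat_length (n : ℕ) :
    ((sg 0 n).flatMap W).length = cnt (fun q => (W (D q)).length) n := by
  induction n with
  | zero => rfl
  | succ n ih =>
    rw [sg_succ, List.flatMap_append, List.length_append, ih, cnt_succ]
    simp

lemma flat_getD (hβ : ∀ q, 1 ≤ (W (D q)).length) (N n : ℕ)
    (hn : n < cnt (fun q => (W (D q)).length) N) :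
    ((sg 0 N).flatMap W).getD n Letter.a =
      (W (D (inv (fun q => (W (D q)).length) n))).getD
        (n - cnt (fun q => (W (D q)).length) (inv (fun q => (W (D q)).length) n))
        Letter.a := by
  induction N with
  | zero => rw [cnt_zero] at hn; omega
  | succ N ih =>
    rw [sg_succ, List.flatMap_append]
    rcases lt_or_ge n (cnt (fun q => (W (D q)).length) N) with h | h
    · rw [List.getD_append _ _ _ _ (by rw [flat_length]; exact h)]
      exact ih h
    · rw [cnt_succ] at hn
      rw [List.getD_append_right _ _ _ _ (by rw [flat_length]; exact h), flat_length,
        show ([D N].flatMap W) = W (D N) by simp,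
        inv_eq (fun q => (W (D q)).length) hβ h (by rw [cnt_succ]; exact hn)]

end theta

def W1 : Letter → List Letter := fun x => match x with
  | Letter.a => [Letter.a]
  | Letter.b => [Letter.b, Letter.b]
  | Letter.c => [Letter.c]

def W2 : Letter → List Letter := fun x => match x with
  | Letter.a => [Letter.a, Letter.b]
  | Letter.b => [Letter.a, Letter.c, Letter.a, Letter.c]
  | Letter.c => [Letter.c]

lemma tau1_flat (w : List Letter) : tau1 w = w.flatMap W1 := rfl

lemma tau2_flat (w : List Letter) : tau2 w = w.flatMap W2 := rfl

noncomputable def beta1 : ℕ → ℕ := fun q => (W1 (D q)).length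

noncomputable def beta2 : ℕ → ℕ := fun q => (W2 (D q)).length

lemma hbeta1 : ∀ q, 1 ≤ beta1 q := by
  intro q
  rw [beta1]
  rcases D_cases q with h | h <;> rw [h] <;> simp [W1]

lemma hbeta2 : ∀ q, 1 ≤ beta2 q := by
  intro q
  rw [beta2]
  rcases D_cases q with h | h <;> rw [h] <;> simp [W2]

lemma beta1_a {q : ℕ} (h : D q = Letter.a) : beta1 q = 1 := by rw [beta1, h]; rfl
lemma beta1_b {q : ℕ} (h : D q = Letter.b) : beta1 q = 2 := by rw [beta1, h]; rfl
lemma beta2_a {q : ℕ} (h : D q = Letter.a) : beta2 q = 2 := by rw [beta2, h]; rfl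
lemma beta2_b {q : ℕ} (h : D q = Letter.b) : beta2 q = 4 := by rw [beta2, h]; rfl

lemma theta1_eq (n : ℕ) : Theta1 (n+1) = D (inv beta1 n) := by
  have h1 : Dseg 1 (n+1) = sg 0 (n+1) := rfl
  have hn : n < cnt beta1 (n+1) := by
    have := le_cnt beta1 hbeta1 (n+1)
    omega
  rw [Theta1, h1, Nat.add_sub_cancel, tau1_flat, flat_getD W1 hbeta1 (n+1) n hn]
  have hspec := inv_spec beta1 hbeta1 n
  rcases D_cases (inv beta1 n) with h | h <;> rw [h]
  · have hb := beta1_a h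
    rw [cnt_succ] at hspec
    have : n - cnt beta1 (inv beta1 n) = 0 := by omega
    rw [show (fun q => (W1 (D q)).length) = beta1 from rfl, this, h]
    rfl
  · have hb := beta1_b h
    rw [cnt_succ] at hspec
    rw [show (fun q => (W1 (D q)).length) = beta1 from rfl]
    have : n - cnt beta1 (inv beta1 n) < 2 := by omega
    interval_cases hs : (n - cnt beta1 (inv beta1 n)) <;> rw [h] <;> rfl

lemma theta2_eq (n : ℕ) : Theta2 (n+1) =
    (W2 (D (inv beta2 n))).getD (n - cnt beta2 (inv beta2 n)) Letter.a := by
  have h1 : Dseg 1 (n+1) = sg 0 (n+1) := rfl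
  have hn : n < cnt beta2 (n+1) := by
    have h2 := le_cnt beta2 hbeta2 (n+1)
    omega
  rw [Theta2, h1, Nat.add_sub_cancel, tau2_flat, flat_getD W2 hbeta2 (n+1) n hn]
  rfl
lemma sg_congr (x y n : ℕ) (h : ∀ j, j < n → D (x + j) = D (y + j)) : sg x n = sg y n := by
  apply (sg_eq_iff _ _ _).2
  refine ⟨(length_sg y n).symm, ?_⟩
  intro j hj
  rw [h j hj, sg_getD y n j hj]

lemma perb (p q : ℕ) (hb : D q = Letter.b) (i : ℕ) (hi : i < 3 * 2^p - 1) :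
    D (q * 2^(p+1) + 2^p + i) = D (q * 2^(p+1) + i) := by
  have hps : (2:ℕ)^(p+1) = 2^p * 2 := pow_succ 2 p
  have hpp := pow_pos2 p
  have h2q1 : D (2*q+1) = Letter.a := by rw [D_odd, hb]; rfl
  rcases lt_or_ge i (2^(p+1) - 1) with h | h
  · have hw := wagree p (2*q) (2*q+1) (by rw [D_even, h2q1]) i h
    calc D (q * 2^(p+1) + 2^p + i) = D ((2*q+1) * 2^p + i) := by
          congr 1; rw [hps]; ring
    _ = D ((2*q) * 2^p + i) := hw.symm
    _ = D (q * 2^(p+1) + i) := by congr 1; rw [hps]; ring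
  · obtain ⟨i', rfl⟩ : ∃ i', i = i' + 2^p := ⟨i - 2^p, by omega⟩
    have h2q2 : D (2*q+2) = Letter.a := by rw [show 2*q+2 = 2*(q+1) by ring, D_even]
    have hw := wagree p (2*q+1) (2*q+2) (by rw [h2q1, h2q2]) i' (by omega)
    calc D (q * 2^(p+1) + 2^p + (i' + 2^p)) = D ((2*q+2) * 2^p + i') := by
          congr 1; rw [hps]; ring
    _ = D ((2*q+1) * 2^p + i') := hw.symm
    _ = D (q * 2^(p+1) + (i' + 2^p)) := by congr 1; rw [hps]; ring

lemma pow2_mod3 (m : ℕ) : 2^m % 3 = 1 ∨ 2^m % 3 = 2 := by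
  induction m with
  | zero => left; rfl
  | succ m ih =>
    rw [pow_succ]
    rcases ih with h | h <;> omega

lemma aa_class (q : ℕ) : (D q = Letter.a ∧ D (q+1) = Letter.a) ↔
    ((∃ w, q = 8*w+2 ∨ q = 8*w+3) ∨ (∃ w, D w = Letter.b ∧ (q = 8*w+6 ∨ q = 8*w+7))) := by
  constructor
  · rintro ⟨h1, h2⟩
    have hv : ∃ v, D v = Letter.b ∧ (q = 2*v ∨ q = 2*v+1) := by
      rcases Nat.even_or_odd q with ⟨v, hq⟩ | ⟨v, hq⟩
      · refine ⟨v, ?_, Or.inl (by omega)⟩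
        have : q + 1 = 2*v+1 := by omega
        rw [this, D_odd] at h2
        cases hD : D v
        · rw [hD] at h2; exact absurd h2 (by simp [comp])
        · rfl
        · rw [hD] at h2; exact absurd h2 (by simp [comp])
      · refine ⟨v, ?_, Or.inr hq⟩
        rw [hq, D_odd] at h1
        cases hD : D v
        · rw [hD] at h1; exact absurd h1 (by simp [comp])
        · rfl
        · rw [hD] at h1; exact absurd h1 (by simp [comp])
    obtain ⟨v, hvb, hqv⟩ := hv
    obtain ⟨u, hua, hvu⟩ := (Db_iff v).1 hvb
    rcases (Da_iff u).1 hua with ⟨w, hw⟩ | ⟨w, hwb, hw⟩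
    · exact Or.inl ⟨w, by omega⟩
    · exact Or.inr ⟨w, hwb, by omega⟩
  · intro h
    have hv : ∃ v, D v = Letter.b ∧ (q = 2*v ∨ q = 2*v+1) := by
      rcases h with ⟨w, hw⟩ | ⟨w, hwb, hw⟩
      · refine ⟨4*w+1, ?_, by omega⟩
        rw [show 4*w+1 = 2*(2*w)+1 by ring, D_odd, D_even]; rfl
      · refine ⟨4*w+3, ?_, by omega⟩
        rw [show 4*w+3 = 2*(2*w+1)+1 by ring, D_odd, D_odd, hwb]; rfl
    obtain ⟨v, hvb, hqv⟩ := hv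
    rcases hqv with rfl | rfl
    · exact ⟨D_even v, by rw [show 2*v+1 = 2*v+1 from rfl, D_odd, hvb]; rfl⟩
    · constructor
      · rw [D_odd, hvb]; rfl
      · rw [show 2*v+1+1 = 2*(v+1) by ring, D_even]
def pos1 (p t q j : ℕ) : ℕ := q * 2^(p+1) + (t + j * 2^p)

lemma case1 (ω : List Letter) (hneL : 1 ≤ ω.length) (p t : ℕ)
    (hb : t + ω.length ≤ 2^(p+1) - 1)
    (hpat : ∀ i, Mt ω i ↔ Pat1 p t i) :
    ∀ P, 1 ≤ P → (Theta1 P = Letter.a → r ω P = r ω 1) ∧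
                  (Theta1 P = Letter.b → r ω P = r ω 2) := by
  have hpp := pow_pos2 p
  have hps : (2:ℕ)^(p+1) = 2^p * 2 := pow_succ 2 p
  have hps2 : (2:ℕ)^(p+1+1) = 2^(p+1) * 2 := pow_succ 2 (p+1)
  have hβle : ∀ q, beta1 q ≤ 2 := by
    intro q
    rcases D_cases q with h | h
    · rw [beta1_a h]; omega
    · rw [beta1_b h]
  have hm1 : ∀ q j, j + 1 < beta1 q → pos1 p t q j < pos1 p t q (j+1) := by
    intro q j hj
    have hj0 : j = 0 := by have := hβle q; omega
    subst hj0
    rw [pos1, pos1]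
    omega
  have hm2 : ∀ q, pos1 p t q (beta1 q - 1) < pos1 p t (q+1) 0 := by
    intro q
    have hle : beta1 q - 1 ≤ 1 := by have := hβle q; omega
    rcases Nat.le_one_iff_eq_zero_or_eq_one.1 hle with h | h <;>
      rw [h, pos1, pos1, add_one_mul] <;> omega
  have hrange : ∀ x, Pat1 p t x ↔ ∃ q j, j < beta1 q ∧ pos1 p t q j = x := by
    intro x
    rw [pat1_def]
    constructor
    · rintro (⟨q, rfl⟩ | ⟨q, hD, rfl⟩)
      · exact ⟨q, 0, hbeta1 q, by rw [pos1]; ring⟩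
      · exact ⟨q, 1, by rw [beta1_b hD]; omega, by rw [pos1]; ring⟩
    · rintro ⟨q, j, hj, rfl⟩
      have hj01 : j = 0 ∨ j = 1 := by have := hβle q; omega
      rcases hj01 with rfl | rfl
      · exact Or.inl ⟨q, by rw [pos1]; ring⟩
      · have hD : D q = Letter.b := by
          rcases D_cases q with h | h
          · rw [beta1_a h] at hj; omega
          · exact h
        exact Or.inr ⟨q, hD, by rw [pos1]; ring⟩
  have hQ : ∀ x, DOccursAt ω x ↔ ∃ n, ee beta1 (pos1 p t) n + 1 = x := by
    intro x
    rw [DOccursAt_iff]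
    constructor
    · rintro ⟨h1, hM⟩
      obtain ⟨q, j, hj, hx⟩ := (hrange _).1 ((hpat _).1 hM)
      obtain ⟨n, hn⟩ := (ee_surj beta1 (pos1 p t) hbeta1 _).2 ⟨q, j, hj, hx⟩
      exact ⟨n, by omega⟩
    · rintro ⟨n, hn⟩
      refine ⟨by omega, ?_⟩
      have h2 : x - 1 = ee beta1 (pos1 p t) n := by omega
      rw [h2]
      exact (hpat _).2 ((hrange _).2 ((ee_surj beta1 (pos1 p t) hbeta1 _).1 ⟨n, rfl⟩))
  have hmono := ee_strictMono beta1 (pos1 p t) hbeta1 hm1 hm2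
  have hnth : ∀ n, Nat.nth (DOccursAt ω) n = ee beta1 (pos1 p t) n + 1 :=
    nth_of_strictMono _ _ (fun a b hab => by have := hmono hab; omega) hQ
  have hr : ∀ n : ℕ, r ω (n+1) = sg (ee beta1 (pos1 p t) n)
      (ee beta1 (pos1 p t) (n+1) - ee beta1 (pos1 p t) n) := by
    intro n
    have hnn : n + 1 ≠ 0 := Nat.succ_ne_zero n
    simp only [r, L]
    rw [if_neg hnn]
    simp only [Nat.add_sub_cancel]
    rw [hnth n, hnth (n+1), Dseg_eq_sg]
    simp only [Nat.add_sub_cancel]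
    congr 1
    omega
  have hinv0 : inv beta1 0 = 0 := inv_eq beta1 hbeta1 (by rw [cnt_zero])
    (by rw [cnt_succ, cnt_zero]; have := hbeta1 0; omega)
  have hcnt1 : cnt beta1 1 = 1 := by rw [cnt_succ, cnt_zero, beta1_a D_zero]
  have hee0 : ee beta1 (pos1 p t) 0 = pos1 p t 0 0 := by
    have h0 := ee_at beta1 (pos1 p t) hbeta1 0 0 (hbeta1 0)
    rw [cnt_zero] at h0
    simpa using h0
  have hee1 : ee beta1 (pos1 p t) 1 = pos1 p t 1 0 := by
    have h0 := ee_at beta1 (pos1 p t) hbeta1 1 0 (hbeta1 1)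
    rw [hcnt1] at h0
    simpa using h0
  have hee2 : ee beta1 (pos1 p t) 2 = pos1 p t 1 1 := by
    have h0 := ee_at beta1 (pos1 p t) hbeta1 1 1 (by rw [beta1_b D_one]; omega)
    rw [hcnt1] at h0
    simpa using h0
  have hr1 : r ω 1 = sg (pos1 p t 0 0) (2^(p+1)) := by
    have h0 := hr 0
    rw [hee0, hee1, show pos1 p t 1 0 - pos1 p t 0 0 = 2^(p+1) by
      rw [pos1, pos1]; omega] at h0
    exact h0
  have hr2 : r ω 2 = sg (pos1 p t 1 0) (2^p) := by
    have h0 := hr 1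
    rw [hee1, hee2, show pos1 p t 1 1 - pos1 p t 1 0 = 2^p by
      rw [pos1, pos1]; omega] at h0
    exact h0
  intro P hP
  obtain ⟨n, rfl⟩ : ∃ n, P = n + 1 := ⟨P - 1, by omega⟩
  obtain ⟨hs1, hs2⟩ := inv_spec beta1 hbeta1 n
  rw [cnt_succ] at hs2
  constructor
  · intro hth
    rw [theta1_eq] at hth
    have hβq : beta1 (inv beta1 n) = 1 := beta1_a hth
    have hn0 : n = cnt beta1 (inv beta1 n) + 0 := by omega
    have he1 : ee beta1 (pos1 p t) n = pos1 p t (inv beta1 n) 0 := by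
      conv_lhs => rw [hn0]
      exact ee_at beta1 (pos1 p t) hbeta1 (inv beta1 n) 0 (hbeta1 _)
    have hsucc : n + 1 = cnt beta1 (inv beta1 n + 1) + 0 := by rw [cnt_succ]; omega
    have he2 : ee beta1 (pos1 p t) (n+1) = pos1 p t (inv beta1 n + 1) 0 := by
      conv_lhs => rw [hsucc]
      exact ee_at beta1 (pos1 p t) hbeta1 (inv beta1 n + 1) 0 (hbeta1 _)
    rw [hr n, he1, he2, hr1,
      show pos1 p t (inv beta1 n + 1) 0 - pos1 p t (inv beta1 n) 0 = 2^(p+1) by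
        rw [pos1, pos1, add_one_mul]; omega]
    apply sg_congr
    intro j hj
    have hw := wagree (p+1) (inv beta1 n) 0 (by rw [hth, D_zero]) (t + 0 * 2^p + j)
      (by omega)
    have e1 : pos1 p t (inv beta1 n) 0 + j = (inv beta1 n) * 2^(p+1) + (t + 0*2^p + j) := by
      rw [pos1]; ring
    have e2 : pos1 p t 0 0 + j = 0 * 2^(p+1) + (t + 0*2^p + j) := by rw [pos1]; ring
    rw [e1, e2]
    exact hw
  · intro hth
    rw [theta1_eq] at hth
    have hβq : beta1 (inv beta1 n) = 2 := beta1_b hth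
    have hj2 : n - cnt beta1 (inv beta1 n) = 0 ∨ n - cnt beta1 (inv beta1 n) = 1 := by omega
    rcases hj2 with hj0 | hj1
    · have hn0 : n = cnt beta1 (inv beta1 n) + 0 := by omega
      have he1 : ee beta1 (pos1 p t) n = pos1 p t (inv beta1 n) 0 := by
        conv_lhs => rw [hn0]
        exact ee_at beta1 (pos1 p t) hbeta1 (inv beta1 n) 0 (hbeta1 _)
      have hsucc : n + 1 = cnt beta1 (inv beta1 n) + 1 := by omega
      have he2 : ee beta1 (pos1 p t) (n+1) = pos1 p t (inv beta1 n) 1 := by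
        conv_lhs => rw [hsucc]
        exact ee_at beta1 (pos1 p t) hbeta1 (inv beta1 n) 1 (by rw [hβq]; omega)
      rw [hr n, he1, he2, hr2,
        show pos1 p t (inv beta1 n) 1 - pos1 p t (inv beta1 n) 0 = 2^p by
          rw [pos1, pos1]; omega]
      apply sg_congr
      intro j hj
      have hw := wagree (p+1) (inv beta1 n) 1 (by rw [hth, D_one]) (t + 0 * 2^p + j)
        (by omega)
      have e1 : pos1 p t (inv beta1 n) 0 + j = (inv beta1 n) * 2^(p+1) + (t + 0*2^p + j) := by
        rw [pos1]; ring
      have e2 : pos1 p t 1 0 + j = 1 * 2^(p+1) + (t + 0*2^p + j) := by rw [pos1]; ring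
      rw [e1, e2]
      exact hw
    · have hn1 : n = cnt beta1 (inv beta1 n) + 1 := by omega
      have he1 : ee beta1 (pos1 p t) n = pos1 p t (inv beta1 n) 1 := by
        conv_lhs => rw [hn1]
        exact ee_at beta1 (pos1 p t) hbeta1 (inv beta1 n) 1 (by rw [hβq]; omega)
      have hsucc : n + 1 = cnt beta1 (inv beta1 n + 1) + 0 := by rw [cnt_succ]; omega
      have he2 : ee beta1 (pos1 p t) (n+1) = pos1 p t (inv beta1 n + 1) 0 := by
        conv_lhs => rw [hsucc]
        exact ee_at beta1 (pos1 p t) hbeta1 (inv beta1 n + 1) 0 (hbeta1 _)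
      rw [hr n, he1, he2, hr2,
        show pos1 p t (inv beta1 n + 1) 0 - pos1 p t (inv beta1 n) 1 = 2^p by
          rw [pos1, pos1, add_one_mul]; omega]
      apply sg_congr
      intro j hj
      have hprb := perb p (inv beta1 n) hth (t + 0*2^p + j) (by omega)
      have hw := wagree (p+1) (inv beta1 n) 1 (by rw [hth, D_one]) (t + 0 * 2^p + j)
        (by omega)
      have e1 : pos1 p t (inv beta1 n) 1 + j =
          (inv beta1 n) * 2^(p+1) + 2^p + (t + 0*2^p + j) := by rw [pos1]; ring
      have e2 : pos1 p t 1 0 + j = 1 * 2^(p+1) + (t + 0*2^p + j) := by rw [pos1]; ring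
      rw [e1, e2, hprb]
      exact hw
def ofs2 : ℕ → ℕ
  | 0 => 2
  | 1 => 3
  | 2 => 6
  | _ => 7

def pos2 (p t q j : ℕ) : ℕ := q * 2^(p+3) + (t + ofs2 j * 2^p)

lemma case2 (ω : List Letter) (hneL : 1 ≤ ω.length) (p t : ℕ)
    (ht : t ≤ 2^p - 1) (hb : t + ω.length ≤ 3 * 2^p - 1)
    (hpat : ∀ i, Mt ω i ↔ Pat2 p t i) :
    ∀ P, 1 ≤ P → (Theta2 P = Letter.a → r ω P = r ω 1) ∧
                  (Theta2 P = Letter.b → r ω P = r ω 2) ∧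
                  (Theta2 P = Letter.c → r ω P = r ω 4) := by
  have hpp := pow_pos2 p
  have h1p : (2:ℕ)^(p+1) = 2^p * 2 := by rw [pow_add]; norm_num
  have h2p : (2:ℕ)^(p+2) = 2^p * 4 := by rw [pow_add]; norm_num
  have h3p : (2:ℕ)^(p+3) = 2^p * 8 := by rw [pow_add]; norm_num
  have h4p : (2:ℕ)^(p+3+1) = 2^p * 16 := by rw [pow_succ, h3p]; ring
  have h2p' : (2:ℕ)^(p+2+1) = 2^p * 8 := by rw [pow_succ, h2p]; ring
  have hβle : ∀ q, beta2 q ≤ 4 := by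
    intro q
    rcases D_cases q with h | h
    · rw [beta2_a h]; omega
    · rw [beta2_b h]
  have hβge : ∀ q, 2 ≤ beta2 q := by
    intro q
    rcases D_cases q with h | h
    · rw [beta2_a h]
    · rw [beta2_b h]; omega
  have hm1 : ∀ q j, j + 1 < beta2 q → pos2 p t q j < pos2 p t q (j+1) := by
    intro q j hj
    have hj3 : j = 0 ∨ j = 1 ∨ j = 2 := by have := hβle q; omega
    rcases hj3 with rfl | rfl | rfl <;> simp only [pos2, ofs2] <;> omega
  have hm2 : ∀ q, pos2 p t q (beta2 q - 1) < pos2 p t (q+1) 0 := by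
    intro q
    rcases D_cases q with h | h
    · rw [beta2_a h]
      simp only [pos2, ofs2, add_one_mul]
      omega
    · rw [beta2_b h]
      show pos2 p t q 3 < pos2 p t (q+1) 0
      simp only [pos2, ofs2, add_one_mul]
      omega
  have hrange : ∀ x, Pat2 p t x ↔ ∃ q j, j < beta2 q ∧ pos2 p t q j = x := by
    intro x
    rw [pat2_def]
    constructor
    · rintro ⟨q, h1, h2, rfl⟩
      rcases (aa_class q).1 ⟨h1, h2⟩ with ⟨w, hw | hw⟩ | ⟨w, hwb, hw | hw⟩
      · exact ⟨w, 0, by have := hβge w; omega,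
          by subst hw; simp only [pos2, ofs2]; ring⟩
      · exact ⟨w, 1, by have := hβge w; omega,
          by subst hw; simp only [pos2, ofs2]; ring⟩
      · exact ⟨w, 2, by rw [beta2_b hwb]; omega,
          by subst hw; simp only [pos2, ofs2]; ring⟩
      · exact ⟨w, 3, by rw [beta2_b hwb]; omega,
          by subst hw; simp only [pos2, ofs2]; ring⟩
    · rintro ⟨q, j, hj, rfl⟩
      have hj4 : j = 0 ∨ j = 1 ∨ j = 2 ∨ j = 3 := by have := hβle q; omega
      rcases hj4 with rfl | rfl | rfl | rfl
      · obtain ⟨ha1, ha2⟩ := (aa_class (8*q+2)).2 (Or.inl ⟨q, Or.inl rfl⟩)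
        exact ⟨8*q+2, ha1, ha2, by simp only [pos2, ofs2]; ring⟩
      · obtain ⟨ha1, ha2⟩ := (aa_class (8*q+3)).2 (Or.inl ⟨q, Or.inr rfl⟩)
        exact ⟨8*q+3, ha1, ha2, by simp only [pos2, ofs2]; ring⟩
      · have hD : D q = Letter.b := by
          rcases D_cases q with h | h
          · rw [beta2_a h] at hj; omega
          · exact h
        obtain ⟨ha1, ha2⟩ := (aa_class (8*q+6)).2 (Or.inr ⟨q, hD, Or.inl rfl⟩)
        exact ⟨8*q+6, ha1, ha2, by simp only [pos2, ofs2]; ring⟩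
      · have hD : D q = Letter.b := by
          rcases D_cases q with h | h
          · rw [beta2_a h] at hj; omega
          · exact h
        obtain ⟨ha1, ha2⟩ := (aa_class (8*q+7)).2 (Or.inr ⟨q, hD, Or.inr rfl⟩)
        exact ⟨8*q+7, ha1, ha2, by simp only [pos2, ofs2]; ring⟩
  have hQ : ∀ x, DOccursAt ω x ↔ ∃ n, ee beta2 (pos2 p t) n + 1 = x := by
    intro x
    rw [DOccursAt_iff]
    constructor
    · rintro ⟨h1, hM⟩
      obtain ⟨q, j, hj, hx⟩ := (hrange _).1 ((hpat _).1 hM)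
      obtain ⟨n, hn⟩ := (ee_surj beta2 (pos2 p t) hbeta2 _).2 ⟨q, j, hj, hx⟩
      exact ⟨n, by omega⟩
    · rintro ⟨n, hn⟩
      refine ⟨by omega, ?_⟩
      have h2 : x - 1 = ee beta2 (pos2 p t) n := by omega
      rw [h2]
      exact (hpat _).2 ((hrange _).2 ((ee_surj beta2 (pos2 p t) hbeta2 _).1 ⟨n, rfl⟩))
  have hmono := ee_strictMono beta2 (pos2 p t) hbeta2 hm1 hm2
  have hnth : ∀ n, Nat.nth (DOccursAt ω) n = ee beta2 (pos2 p t) n + 1 :=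
    nth_of_strictMono _ _ (fun a b hab => by have := hmono hab; omega) hQ
  have hr : ∀ n : ℕ, r ω (n+1) = sg (ee beta2 (pos2 p t) n)
      (ee beta2 (pos2 p t) (n+1) - ee beta2 (pos2 p t) n) := by
    intro n
    have hnn : n + 1 ≠ 0 := Nat.succ_ne_zero n
    simp only [r, L]
    rw [if_neg hnn]
    simp only [Nat.add_sub_cancel]
    rw [hnth n, hnth (n+1), Dseg_eq_sg]
    simp only [Nat.add_sub_cancel]
    congr 1
    omega
  have hcnt1 : cnt beta2 1 = 2 := by rw [cnt_succ, cnt_zero, beta2_a D_zero]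
  have hee0 : ee beta2 (pos2 p t) 0 = pos2 p t 0 0 := by
    have h0 := ee_at beta2 (pos2 p t) hbeta2 0 0 (by rw [beta2_a D_zero]; omega)
    rw [cnt_zero] at h0
    simpa using h0
  have hee1 : ee beta2 (pos2 p t) 1 = pos2 p t 0 1 := by
    have h0 := ee_at beta2 (pos2 p t) hbeta2 0 1 (by rw [beta2_a D_zero]; omega)
    rw [cnt_zero] at h0
    simpa using h0
  have hee2 : ee beta2 (pos2 p t) 2 = pos2 p t 1 0 := by
    have h0 := ee_at beta2 (pos2 p t) hbeta2 1 0 (by rw [beta2_b D_one]; omega)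
    rw [hcnt1] at h0
    simpa using h0
  have hee3 : ee beta2 (pos2 p t) 3 = pos2 p t 1 1 := by
    have h0 := ee_at beta2 (pos2 p t) hbeta2 1 1 (by rw [beta2_b D_one]; omega)
    rw [hcnt1] at h0
    simpa using h0
  have hee4 : ee beta2 (pos2 p t) 4 = pos2 p t 1 2 := by
    have h0 := ee_at beta2 (pos2 p t) hbeta2 1 2 (by rw [beta2_b D_one]; omega)
    rw [hcnt1] at h0
    simpa using h0
  have hr1 : r ω 1 = sg (pos2 p t 0 0) (2^p) := by
    have h0 := hr 0
    rw [hee0, hee1, show pos2 p t 0 1 - pos2 p t 0 0 = 2^p by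
      simp only [pos2, ofs2]; omega] at h0
    exact h0
  have hr2 : r ω 2 = sg (pos2 p t 0 1) (7 * 2^p) := by
    have h0 := hr 1
    rw [hee1, hee2, show pos2 p t 1 0 - pos2 p t 0 1 = 7 * 2^p by
      simp only [pos2, ofs2]; omega] at h0
    exact h0
  have hr4 : r ω 4 = sg (pos2 p t 1 1) (3 * 2^p) := by
    have h0 := hr 3
    rw [hee3, hee4, show pos2 p t 1 2 - pos2 p t 1 1 = 3 * 2^p by
      simp only [pos2, ofs2]; omega] at h0
    exact h0
  intro P hP
  obtain ⟨n, rfl⟩ : ∃ n, P = n + 1 := ⟨P - 1, by omega⟩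
  obtain ⟨hs1, hs2⟩ := inv_spec beta2 hbeta2 n
  rw [cnt_succ] at hs2
  have hDhd : ∀ i, i < 2^(p+3) - 1 → D ((inv beta2 n) * 2^(p+3) + i) = D i := by
    intro i hi
    exact D_head (p+3) (inv beta2 n) i hi
  refine ⟨?_, ?_, ?_⟩ <;> intro hth <;> rw [theta2_eq] at hth
  · -- Theta2 = a : slots (x,0) and (b-letter,2)
    rcases D_cases (inv beta2 n) with hD | hD
    · have hβq : beta2 (inv beta2 n) = 2 := beta2_a hD
      have hsl : n - cnt beta2 (inv beta2 n) = 0 ∨ n - cnt beta2 (inv beta2 n) = 1 := by omega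
      rcases hsl with hsl | hsl
      · -- slot 0
        have hn0 : n = cnt beta2 (inv beta2 n) + 0 := by omega
        have he1 : ee beta2 (pos2 p t) n = pos2 p t (inv beta2 n) 0 := by
          conv_lhs => rw [hn0]
          exact ee_at beta2 (pos2 p t) hbeta2 (inv beta2 n) 0 (by omega)
        have hsucc : n + 1 = cnt beta2 (inv beta2 n) + 1 := by omega
        have he2 : ee beta2 (pos2 p t) (n+1) = pos2 p t (inv beta2 n) 1 := by
          conv_lhs => rw [hsucc]
          exact ee_at beta2 (pos2 p t) hbeta2 (inv beta2 n) 1 (by omega)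
        rw [hr n, he1, he2, hr1, show pos2 p t (inv beta2 n) 1 - pos2 p t (inv beta2 n) 0
            = 2^p by simp only [pos2, ofs2]; omega]
        apply sg_congr
        intro j hj
        have e1 : pos2 p t (inv beta2 n) 0 + j =
            (inv beta2 n) * 2^(p+3) + (t + ofs2 0 * 2^p + j) := by rw [pos2]; ring
        have e2 : pos2 p t 0 0 + j = t + ofs2 0 * 2^p + j := by simp only [pos2]; ring
        rw [e1, e2]
        exact hDhd _ (by simp only [ofs2]; omega)
      · -- slot 1 : Theta2 = b, contradiction
        rw [hD, hsl] at hth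
        exact absurd hth (by decide)
    · have hβq : beta2 (inv beta2 n) = 4 := beta2_b hD
      have hsl : n - cnt beta2 (inv beta2 n) = 0 ∨ n - cnt beta2 (inv beta2 n) = 1 ∨
          n - cnt beta2 (inv beta2 n) = 2 ∨ n - cnt beta2 (inv beta2 n) = 3 := by omega
      rcases hsl with hsl | hsl | hsl | hsl
      · -- slot 0, Theta2 = a ok
        have hn0 : n = cnt beta2 (inv beta2 n) + 0 := by omega
        have he1 : ee beta2 (pos2 p t) n = pos2 p t (inv beta2 n) 0 := by
          conv_lhs => rw [hn0]
          exact ee_at beta2 (pos2 p t) hbeta2 (inv beta2 n) 0 (by omega)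
        have hsucc : n + 1 = cnt beta2 (inv beta2 n) + 1 := by omega
        have he2 : ee beta2 (pos2 p t) (n+1) = pos2 p t (inv beta2 n) 1 := by
          conv_lhs => rw [hsucc]
          exact ee_at beta2 (pos2 p t) hbeta2 (inv beta2 n) 1 (by omega)
        rw [hr n, he1, he2, hr1, show pos2 p t (inv beta2 n) 1 - pos2 p t (inv beta2 n) 0
            = 2^p by simp only [pos2, ofs2]; omega]
        apply sg_congr
        intro j hj
        have e1 : pos2 p t (inv beta2 n) 0 + j =
            (inv beta2 n) * 2^(p+3) + (t + ofs2 0 * 2^p + j) := by rw [pos2]; ring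
        have e2 : pos2 p t 0 0 + j = t + ofs2 0 * 2^p + j := by simp only [pos2]; ring
        rw [e1, e2]
        exact hDhd _ (by simp only [ofs2]; omega)
      · rw [hD, hsl] at hth
        exact absurd hth (by decide)
      · -- slot 2, Theta2 = a ok
        have hn0 : n = cnt beta2 (inv beta2 n) + 2 := by omega
        have he1 : ee beta2 (pos2 p t) n = pos2 p t (inv beta2 n) 2 := by
          conv_lhs => rw [hn0]
          exact ee_at beta2 (pos2 p t) hbeta2 (inv beta2 n) 2 (by omega)
        have hsucc : n + 1 = cnt beta2 (inv beta2 n) + 3 := by omega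
        have he2 : ee beta2 (pos2 p t) (n+1) = pos2 p t (inv beta2 n) 3 := by
          conv_lhs => rw [hsucc]
          exact ee_at beta2 (pos2 p t) hbeta2 (inv beta2 n) 3 (by omega)
        rw [hr n, he1, he2, hr1, show pos2 p t (inv beta2 n) 3 - pos2 p t (inv beta2 n) 2
            = 2^p by simp only [pos2, ofs2]; omega]
        apply sg_congr
        intro j hj
        have h2w1 : D (2 * (inv beta2 n) + 1) = Letter.a := by rw [D_odd, hD]; rfl
        have hwag := wagree (p+2) (2 * (inv beta2 n) + 1) (2 * (inv beta2 n))
          (by rw [h2w1, D_even]) (t + ofs2 0 * 2^p + j)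
          (by simp only [ofs2]; omega)
        have e1 : pos2 p t (inv beta2 n) 2 + j =
            (2 * (inv beta2 n) + 1) * 2^(p+2) + (t + ofs2 0 * 2^p + j) := by
          simp only [pos2, ofs2]; rw [h2p, h3p]; ring
        have e2 : (2 * (inv beta2 n)) * 2^(p+2) + (t + ofs2 0 * 2^p + j) =
            (inv beta2 n) * 2^(p+3) + (t + ofs2 0 * 2^p + j) := by
          rw [h2p, h3p]; ring
        have e3 : pos2 p t 0 0 + j = t + ofs2 0 * 2^p + j := by simp only [pos2]; ring
        rw [e1, hwag, e2, e3]
        exact hDhd _ (by simp only [ofs2]; omega)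
      · rw [hD, hsl] at hth
        exact absurd hth (by decide)
  · -- Theta2 = b : slot (a-letter, 1)
    rcases D_cases (inv beta2 n) with hD | hD
    · have hβq : beta2 (inv beta2 n) = 2 := beta2_a hD
      have hsl : n - cnt beta2 (inv beta2 n) = 0 ∨ n - cnt beta2 (inv beta2 n) = 1 := by omega
      rcases hsl with hsl | hsl
      · rw [hD, hsl] at hth
        exact absurd hth (by decide)
      · have hn0 : n = cnt beta2 (inv beta2 n) + 1 := by omega
        have he1 : ee beta2 (pos2 p t) n = pos2 p t (inv beta2 n) 1 := by
          conv_lhs => rw [hn0]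
          exact ee_at beta2 (pos2 p t) hbeta2 (inv beta2 n) 1 (by omega)
        have hsucc : n + 1 = cnt beta2 (inv beta2 n + 1) + 0 := by rw [cnt_succ]; omega
        have he2 : ee beta2 (pos2 p t) (n+1) = pos2 p t (inv beta2 n + 1) 0 := by
          conv_lhs => rw [hsucc]
          exact ee_at beta2 (pos2 p t) hbeta2 (inv beta2 n + 1) 0 (by have := hβge (inv beta2 n + 1); omega)
        rw [hr n, he1, he2, hr2, show pos2 p t (inv beta2 n + 1) 0 - pos2 p t (inv beta2 n) 1
            = 7 * 2^p by simp only [pos2, ofs2, add_one_mul]; omega]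
        apply sg_congr
        intro j hj
        have hwag := wagree (p+3) (inv beta2 n) 0 (by rw [hD, D_zero])
          (t + ofs2 1 * 2^p + j) (by simp only [ofs2]; omega)
        have e1 : pos2 p t (inv beta2 n) 1 + j =
            (inv beta2 n) * 2^(p+3) + (t + ofs2 1 * 2^p + j) := by rw [pos2]; ring
        have e2 : pos2 p t 0 1 + j = 0 * 2^(p+3) + (t + ofs2 1 * 2^p + j) := by
          rw [pos2]; ring
        rw [e1, e2]
        exact hwag
    · have hβq : beta2 (inv beta2 n) = 4 := beta2_b hD
      have hsl : n - cnt beta2 (inv beta2 n) = 0 ∨ n - cnt beta2 (inv beta2 n) = 1 ∨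
          n - cnt beta2 (inv beta2 n) = 2 ∨ n - cnt beta2 (inv beta2 n) = 3 := by omega
      rcases hsl with hsl | hsl | hsl | hsl <;> rw [hD, hsl] at hth <;>
        exact absurd hth (by decide)
  · -- Theta2 = c : slots (b-letter, 1) and (b-letter, 3)
    rcases D_cases (inv beta2 n) with hD | hD
    · have hβq : beta2 (inv beta2 n) = 2 := beta2_a hD
      have hsl : n - cnt beta2 (inv beta2 n) = 0 ∨ n - cnt beta2 (inv beta2 n) = 1 := by omega
      rcases hsl with hsl | hsl <;> rw [hD, hsl] at hth <;> exact absurd hth (by decide)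
    · have hβq : beta2 (inv beta2 n) = 4 := beta2_b hD
      have hsl : n - cnt beta2 (inv beta2 n) = 0 ∨ n - cnt beta2 (inv beta2 n) = 1 ∨
          n - cnt beta2 (inv beta2 n) = 2 ∨ n - cnt beta2 (inv beta2 n) = 3 := by omega
      rcases hsl with hsl | hsl | hsl | hsl
      · rw [hD, hsl] at hth
        exact absurd hth (by decide)
      · -- slot 1
        have hn0 : n = cnt beta2 (inv beta2 n) + 1 := by omega
        have he1 : ee beta2 (pos2 p t) n = pos2 p t (inv beta2 n) 1 := by
          conv_lhs => rw [hn0]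
          exact ee_at beta2 (pos2 p t) hbeta2 (inv beta2 n) 1 (by omega)
        have hsucc : n + 1 = cnt beta2 (inv beta2 n) + 2 := by omega
        have he2 : ee beta2 (pos2 p t) (n+1) = pos2 p t (inv beta2 n) 2 := by
          conv_lhs => rw [hsucc]
          exact ee_at beta2 (pos2 p t) hbeta2 (inv beta2 n) 2 (by omega)
        rw [hr n, he1, he2, hr4, show pos2 p t (inv beta2 n) 2 - pos2 p t (inv beta2 n) 1
            = 3 * 2^p by simp only [pos2, ofs2]; omega]
        apply sg_congr
        intro j hj
        have hwag := wagree (p+3) (inv beta2 n) 1 (by rw [hD, D_one])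
          (t + ofs2 1 * 2^p + j) (by simp only [ofs2]; omega)
        have e1 : pos2 p t (inv beta2 n) 1 + j =
            (inv beta2 n) * 2^(p+3) + (t + ofs2 1 * 2^p + j) := by rw [pos2]; ring
        have e2 : pos2 p t 1 1 + j = 1 * 2^(p+3) + (t + ofs2 1 * 2^p + j) := by
          rw [pos2]; ring
        rw [e1, e2]
        exact hwag
      · rw [hD, hsl] at hth
        exact absurd hth (by decide)
      · -- slot 3
        have hn0 : n = cnt beta2 (inv beta2 n) + 3 := by omega
        have he1 : ee beta2 (pos2 p t) n = pos2 p t (inv beta2 n) 3 := by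
          conv_lhs => rw [hn0]
          exact ee_at beta2 (pos2 p t) hbeta2 (inv beta2 n) 3 (by omega)
        have hsucc : n + 1 = cnt beta2 (inv beta2 n + 1) + 0 := by rw [cnt_succ]; omega
        have he2 : ee beta2 (pos2 p t) (n+1) = pos2 p t (inv beta2 n + 1) 0 := by
          conv_lhs => rw [hsucc]
          exact ee_at beta2 (pos2 p t) hbeta2 (inv beta2 n + 1) 0 (by have := hβge (inv beta2 n + 1); omega)
        rw [hr n, he1, he2, hr4, show pos2 p t (inv beta2 n + 1) 0 - pos2 p t (inv beta2 n) 3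
            = 3 * 2^p by simp only [pos2, ofs2, add_one_mul]; omega]
        apply sg_congr
        intro j hj
        have h2w1 : D (2 * (inv beta2 n) + 1) = Letter.a := by rw [D_odd, hD]; rfl
        have hwag1 := wagree (p+2) (2 * (inv beta2 n) + 1) (2 * (inv beta2 n))
          (by rw [h2w1, D_even]) (t + ofs2 1 * 2^p + j)
          (by simp only [ofs2]; omega)
        have hwag2 := wagree (p+3) (inv beta2 n) 1 (by rw [hD, D_one])
          (t + ofs2 1 * 2^p + j) (by simp only [ofs2]; omega)
        have e1 : pos2 p t (inv beta2 n) 3 + j =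
            (2 * (inv beta2 n) + 1) * 2^(p+2) + (t + ofs2 1 * 2^p + j) := by
          simp only [pos2, ofs2]; rw [h2p, h3p]; ring
        have e2 : (2 * (inv beta2 n)) * 2^(p+2) + (t + ofs2 1 * 2^p + j) =
            (inv beta2 n) * 2^(p+3) + (t + ofs2 1 * 2^p + j) := by
          rw [h2p, h3p]; ring
        have e3 : pos2 p t 1 1 + j = 1 * 2^(p+3) + (t + ofs2 1 * 2^p + j) := by
          rw [pos2]; ring
        rw [e1, hwag1, e2, hwag2, e3]

end PD

/-- Let ω be an arbitrary (nonempty) factor of D.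
(1) If Env(ω) = E_{1,m} (m ≥ 1) then for every p ≥ 1, r_p(ω) = r_1(ω) if Θ₁[p] = a
and r_p(ω) = r_2(ω) if Θ₁[p] = b.
(2) If Env(ω) = E_{2,m} (m ≥ 1) then for every p ≥ 1, r_p(ω) = r_1(ω) if Θ₂[p] = a,
r_p(ω) = r_2(ω) if Θ₂[p] = b, and r_p(ω) = r_4(ω) if Θ₂[p] = c. -/
theorem return_words_of_general_factor (ω : List Letter) (hfac : FactorD ω)
    (hne : ω ≠ []) :
    (∀ m : ℕ, 1 ≤ m → Env ω = E1 m → ∀ p : ℕ, 1 ≤ p →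
      (Theta1 p = .a → r ω p = r ω 1) ∧
      (Theta1 p = .b → r ω p = r ω 2)) ∧
    (∀ m : ℕ, 1 ≤ m → Env ω = E2 m → ∀ p : ℕ, 1 ≤ p →
      (Theta2 p = .a → r ω p = r ω 1) ∧
      (Theta2 p = .b → r ω p = r ω 2) ∧
      (Theta2 p = .c → r ω p = r ω 4)) := by
  obtain ⟨i₀, hM⟩ := (PD.factorD_iff ω).1 hfac
  have hneL : 1 ≤ ω.length := List.length_pos_iff.2 hne
  obtain ⟨hO1, hO2⟩ := PD.occ_main ω.length ω le_rfl hne ⟨i₀, hM⟩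
  have hEnvK : Env ω = Eword (PD.K0 ω) := rfl
  constructor
  · intro m hm hEnv
    rcases Nat.even_or_odd (PD.K0 ω) with ⟨p, hK⟩ | ⟨p, hK⟩
    · have hKe : PD.K0 ω = 2*p := by omega
      obtain ⟨t, hb, hpat⟩ := hO1 p hKe
      exact PD.case1 ω hneL p t hb hpat
    · exfalso
      have hKo : PD.K0 ω = 2*p+1 := by omega
      have h1 : Eword (PD.K0 ω) = E2 (p+1) := by rw [hKo]; exact PD.Eword_odd p
      have h2 : E2 (p+1) = E1 m := by rw [← h1, ← hEnvK, hEnv]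
      have h3 := congrArg List.length h2
      rw [PD.length_E2, PD.length_E1] at h3
      have h4 : 3 * 2^p = 2^m := by
        have hx := PD.pow_pos2 p
        have hy := PD.pow_pos2 m
        omega
      rcases PD.pow2_mod3 m with h5 | h5 <;> omega
  · intro m hm hEnv
    rcases Nat.even_or_odd (PD.K0 ω) with ⟨p, hK⟩ | ⟨p, hK⟩
    · exfalso
      have hKe : PD.K0 ω = 2*p := by omega
      have h1 : Eword (PD.K0 ω) = E1 (p+1) := by rw [hKe]; exact PD.Eword_even p
      have h2 : E1 (p+1) = E2 m := by rw [← h1, ← hEnvK, hEnv]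
      obtain ⟨m', rfl⟩ : ∃ m', m = m' + 1 := ⟨m - 1, by omega⟩
      have h3 := congrArg List.length h2
      rw [PD.length_E1, PD.length_E2] at h3
      have h4 : 2^(p+1) = 3 * 2^m' := by
        have hx := PD.pow_pos2 (p+1)
        have hy := PD.pow_pos2 m'
        omega
      rcases PD.pow2_mod3 (p+1) with h5 | h5 <;> omega
    · have hKo : PD.K0 ω = 2*p+1 := by omega
      obtain ⟨t, ht, hb, hpat⟩ := hO2 p hKo
      exact PD.case2 ω hneL p t ht hb hpat
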